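/- arXiv:0912.4100 — 3 statements merged into one kernel-verified Lean document; each statement's English description precedes it below -/
import Mathlib

section
/- Let T be a finite tree and θ a real number. Then T is θ-super positive if and only if θ=0 and T has a perfect matching. -/
open Polynomial

namespace MatchPoly

variable {V : Type*}

/-- The number of `r`-matchings in `G`: sets of `r` edges, no two sharing a vertex. -/
noncomputable def numMatchings (G : SimpleGraph V) (r : ℕ) : ℕ :=
  Nat.card {M : Finset (Sym2 V) // M.card = r ∧ (M : Set (Sym2 V)) ⊆ G.edgeSet ∧
    (M : Set (Sym2 V)).Pairwise fun e f => ∀ v : V, v ∈ e → v ∉ f}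

/-- The matching polynomial `μ(G,x) = ∑ (-1)^r p(G,r) x^(n-2r)`. -/
noncomputable def matchingPoly (G : SimpleGraph V) : Polynomial ℝ :=
  ∑ r ∈ Finset.range (Nat.card V + 1),
    Polynomial.C ((-1 : ℝ) ^ r * (numMatchings G r : ℝ)) *
      (Polynomial.X : Polynomial ℝ) ^ (Nat.card V - 2 * r)

/-- `mult θ G`: the multiplicity of `θ` as a root of `μ(G,x)`. -/
noncomputable def mult (θ : ℝ) (G : SimpleGraph V) : ℕ :=
  (matchingPoly G).rootMultiplicity θ

/-- `G \ X`: the induced subgraph on the complement of the vertex set `X`. -/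
def deleteSet (G : SimpleGraph V) (X : Set V) : SimpleGraph ↥(Xᶜ) :=
  G.induce (Xᶜ)

/-- `G \ v`: delete a single vertex. -/
def deleteVert (G : SimpleGraph V) (v : V) : SimpleGraph ↥({v}ᶜ : Set V) :=
  G.induce ({v}ᶜ : Set V)

/-- `u` is θ-essential: `mult(θ, G\u) = mult(θ,G) - 1`. -/
def IsEssential (θ : ℝ) (G : SimpleGraph V) (u : V) : Prop :=
  mult θ (deleteVert G u) + 1 = mult θ G

/-- `u` is θ-neutral: `mult(θ, G\u) = mult(θ,G)`. -/
def IsNeutral (θ : ℝ) (G : SimpleGraph V) (u : V) : Prop :=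
  mult θ (deleteVert G u) = mult θ G

/-- `u` is θ-positive: `mult(θ, G\u) = mult(θ,G) + 1`. -/
def IsPositive (θ : ℝ) (G : SimpleGraph V) (u : V) : Prop :=
  mult θ (deleteVert G u) = mult θ G + 1

/-- `u` is θ-special: not θ-essential but adjacent to a θ-essential vertex. -/
def IsSpecial (θ : ℝ) (G : SimpleGraph V) (u : V) : Prop :=
  ¬ IsEssential θ G u ∧ ∃ w : V, G.Adj u w ∧ IsEssential θ G w

/-- `A_θ(G)`: the set of θ-special vertices. -/
def specialSet (θ : ℝ) (G : SimpleGraph V) : Set V := {u | IsSpecial θ G u}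

/-- `N_θ(G)`: the set of θ-neutral vertices. -/
def neutralSet (θ : ℝ) (G : SimpleGraph V) : Set V := {u | IsNeutral θ G u}

/-- `P_θ(G)`: the set of θ-positive vertices that are not θ-special. -/
def positiveSet (θ : ℝ) (G : SimpleGraph V) : Set V :=
  {u | IsPositive θ G u ∧ ¬ IsSpecial θ G u}

/-- `G` is θ-super positive: `mult(θ,G) = 0` and `mult(θ,G\v) = 1` for every vertex `v`. -/
def IsSuperPositive (θ : ℝ) (G : SimpleGraph V) : Prop :=
  mult θ G = 0 ∧ ∀ v : V, mult θ (deleteVert G v) = 1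

/-- `G` is θ-elementary: θ-super positive and `P_θ(G\v) = ∅` for every vertex `v`. -/
def IsElementary (θ : ℝ) (G : SimpleGraph V) : Prop :=
  IsSuperPositive θ G ∧ ∀ v : V, positiveSet θ (deleteVert G v) = ∅

/-- `G` is θ-critical: every vertex is θ-essential and `mult(θ,G) = 1`. -/
def IsCritical (θ : ℝ) (G : SimpleGraph V) : Prop :=
  (∀ v : V, IsEssential θ G v) ∧ mult θ G = 1

/-- `c_θ(G)`: the number of θ-critical connected components of `G`. -/
noncomputable def numCritComponents (θ : ℝ) (G : SimpleGraph V) : ℕ :=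
  Nat.card {c : G.ConnectedComponent // IsCritical θ (G.induce c.supp)}

/-- `X` is a θ-barrier set: `mult(θ,G) = c_θ(G\X) - |X|`. -/
def IsBarrier (θ : ℝ) (G : SimpleGraph V) (X : Set V) : Prop :=
  numCritComponents θ (deleteSet G X) = mult θ G + X.ncard

/-- `X` is a θ-extreme set: `mult(θ,G\X) = mult(θ,G) + |X|`. -/
def IsExtreme (θ : ℝ) (G : SimpleGraph V) (X : Set V) : Prop :=
  mult θ (deleteSet G X) = mult θ G + X.ncard

/-- `G` is θ-base: θ-super positive and no θ-barrier set contains two adjacent vertices. -/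
def IsBase (θ : ℝ) (G : SimpleGraph V) : Prop :=
  IsSuperPositive θ G ∧
    ∀ X : Set V, IsBarrier θ G X → ∀ u v : V, u ∈ X → v ∈ X → ¬ G.Adj u v


/-- the matching property -/
def MProp (G : SimpleGraph V) (M : Finset (Sym2 V)) : Prop :=
  (M : Set (Sym2 V)) ⊆ G.edgeSet ∧
    (M : Set (Sym2 V)).Pairwise fun e f => ∀ v : V, v ∈ e → v ∉ f

lemma numMatchings_def (G : SimpleGraph V) (r : ℕ) :
    numMatchings G r = Nat.card {M : Finset (Sym2 V) // M.card = r ∧ MProp G M} := rfl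

instance finite_finset_sym2 [Finite V] : Finite (Finset (Sym2 V)) := by
  classical
  cases nonempty_fintype V
  exact inferInstance

lemma mprop_empty (G : SimpleGraph V) : MProp G ∅ := by
  constructor
  · simp
  · simp [Set.pairwise_empty]

lemma numMatchings_zero [Finite V] (G : SimpleGraph V) : numMatchings G 0 = 1 := by
  rw [numMatchings_def]
  haveI : Unique {M : Finset (Sym2 V) // M.card = 0 ∧ MProp G M} :=
    { default := ⟨∅, by simp, mprop_empty G⟩
      uniq := fun M => Subtype.ext (Finset.card_eq_zero.mp M.2.1) }
  exact Nat.card_unique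

/-- vertex set of an edge as a Finset -/
noncomputable def eVerts (e : Sym2 V) : Finset V :=
  letI := Classical.decEq V
  Sym2.lift ⟨fun a b => {a, b}, fun a b => Finset.pair_comm a b⟩ e

lemma mem_eVerts {e : Sym2 V} {v : V} : v ∈ eVerts e ↔ v ∈ e := by
  classical
  induction e with
  | _ a b => simp [eVerts, Sym2.mem_iff]

lemma card_eVerts {G : SimpleGraph V} {e : Sym2 V} (he : e ∈ G.edgeSet) :
    (eVerts e).card = 2 := by
  classical
  induction e with
  | _ a b =>
    have hab : a ≠ b := (G.mem_edgeSet.mp he).ne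
    have : eVerts s(a,b) = {a, b} := by
      ext x; simp [mem_eVerts, Sym2.mem_iff, Finset.mem_insert]
    rw [this, Finset.card_insert_of_notMem (by simpa using hab), Finset.card_singleton]

lemma card_biUnion_eVerts [Fintype V] [DecidableEq V] {G : SimpleGraph V} {M : Finset (Sym2 V)}
    (h : MProp G M) : (M.biUnion eVerts).card = 2 * M.card := by
  rw [Finset.card_biUnion]
  · rw [Finset.sum_congr rfl fun e he => card_eVerts (h.1 he)]
    simp [Nat.mul_comm]
  · intro e he f hf hef
    rw [Function.onFun, Finset.disjoint_left]
    intro v hv hv'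
    exact (h.2 he hf hef) v (mem_eVerts.mp hv) (mem_eVerts.mp hv')

lemma mprop_card_le [Finite V] {G : SimpleGraph V} {M : Finset (Sym2 V)} (h : MProp G M) :
    2 * M.card ≤ Nat.card V := by
  classical
  cases nonempty_fintype V
  rw [Nat.card_eq_fintype_card, ← card_biUnion_eVerts h]
  exact Finset.card_le_univ _

lemma numMatchings_eq_zero [Finite V] {G : SimpleGraph V} {r : ℕ} (h : Nat.card V < 2 * r) :
    numMatchings G r = 0 := by
  rw [numMatchings_def, Nat.card_eq_zero]
  left
  constructor
  rintro ⟨M, hcard, hM⟩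
  have := mprop_card_le hM
  omega


lemma map_val_mem_edgeSet {G : SimpleGraph V} {s : Set V} {e : Sym2 ↥s} :
    e ∈ (G.induce s).edgeSet ↔ Sym2.map Subtype.val e ∈ G.edgeSet := by
  induction e with
  | _ a b => simp [SimpleGraph.mem_edgeSet, SimpleGraph.induce]

lemma transfer_aux [Finite V] (G : SimpleGraph V) (s : Set V) (r : ℕ) :
    Nat.card {M : Finset (Sym2 ↥s) // M.card = r ∧ MProp (G.induce s) M} =
      Nat.card {M : Finset (Sym2 V) // M.card = r ∧ MProp G M ∧ ∀ e ∈ M, ∀ v ∈ e, v ∈ s} := by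
  classical
  have hinj : Function.Injective (Sym2.map (Subtype.val : ↥s → V)) :=
    Sym2.map.injective Subtype.val_injective
  haveI : Finite ↥s := Subtype.finite
  let emb : Sym2 ↥s ↪ Sym2 V := ⟨_, hinj⟩
  have hF : ∀ M : {M : Finset (Sym2 ↥s) // M.card = r ∧ MProp (G.induce s) M},
      (M.1.map emb).card = r ∧ MProp G (M.1.map emb) ∧ ∀ e ∈ M.1.map emb, ∀ v ∈ e, v ∈ s := by
    rintro ⟨M, hcard, hsub, hpw⟩
    refine ⟨by simp [hcard], ⟨?_, ?_⟩, ?_⟩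
    · intro e he
      rw [Finset.mem_coe, Finset.mem_map] at he
      obtain ⟨e', he', rfl⟩ := he
      exact map_val_mem_edgeSet.mp (hsub he')
    · intro e he f hf hef v hve hvf
      rw [Finset.mem_coe, Finset.mem_map] at he hf
      obtain ⟨e', he', rfl⟩ := he
      obtain ⟨f', hf', rfl⟩ := hf
      have hne : e' ≠ f' := fun h => hef (by rw [h])
      obtain ⟨x, hx, hxv⟩ := Sym2.mem_map.mp hve
      obtain ⟨y, hy, hyv⟩ := Sym2.mem_map.mp hvf
      have : x = y := Subtype.val_injective (hxv.trans hyv.symm)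
      exact hpw he' hf' hne x hx (this ▸ hy)
    · intro e he v hve
      rw [Finset.mem_map] at he
      obtain ⟨e', _, rfl⟩ := he
      obtain ⟨x, _, hxv⟩ := Sym2.mem_map.mp hve
      exact hxv ▸ x.2
  apply Nat.card_eq_of_bijective (fun M => ⟨M.1.map emb, hF M⟩)
  constructor
  · intro M N h
    exact Subtype.ext (Finset.map_injective emb (congrArg Subtype.val h))
  · rintro ⟨N, hc, ⟨hsub, hpw⟩, hins⟩
    have hrange : ∀ e ∈ N, ∃ e' : Sym2 ↥s, Sym2.map Subtype.val e' = e := by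
      intro e
      induction e with
      | _ a b =>
        intro he
        exact ⟨s(⟨a, hins _ he a (by simp)⟩, ⟨b, hins _ he b (by simp)⟩), by simp⟩
    set M : Finset (Sym2 ↥s) := N.preimage (Sym2.map Subtype.val) hinj.injOn with hM
    have hmap : M.map emb = N := by
      rw [Finset.map_eq_image]
      show Finset.image (Sym2.map Subtype.val) M = N
      rw [hM, Finset.image_preimage]
      apply Finset.filter_true_of_mem
      intro e he
      obtain ⟨e', he'⟩ := hrange e he
      exact ⟨e', he'⟩
    have hcard : M.card = r := by
      have := Finset.card_map emb (s := M)
      rw [hmap] at this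
      omega
    have hmem : ∀ e' : Sym2 ↥s, e' ∈ M ↔ Sym2.map Subtype.val e' ∈ N := by
      intro e'; rw [hM, Finset.mem_preimage]
    refine ⟨⟨M, hcard, ?_, ?_⟩, Subtype.ext hmap⟩
    · intro e' he'
      exact map_val_mem_edgeSet.mpr (hsub ((hmem e').mp he'))
    · intro e' he' f' hf' hne x hxe hxf
      refine hpw ((hmem e').mp he') ((hmem f').mp hf') (fun h => hne (hinj h)) (x : V) ?_ ?_
      · exact Sym2.mem_map.mpr ⟨x, hxe, rfl⟩
      · exact Sym2.mem_map.mpr ⟨x, hxf, rfl⟩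


lemma leaf_edge {G : SimpleGraph V} {u w : V} (hleaf : ∀ x, G.Adj u x → x = w)
    {e : Sym2 V} (he : e ∈ G.edgeSet) (hue : u ∈ e) : e = s(u, w) := by
  obtain ⟨y, rfl⟩ := Sym2.mem_iff_exists.mp hue
  rw [hleaf y (G.mem_edgeSet.mp he)]

section Key
variable [Finite V] {G : SimpleGraph V} {u w : V}

theorem numMatchings_rec' (h : G.Adj u w) (hleaf : ∀ x, G.Adj u x → x = w) (r : ℕ) :
    Nat.card {M : Finset (Sym2 V) // M.card = r + 1 ∧ MProp G M} =
      Nat.card {M : Finset (Sym2 V) // M.card = r + 1 ∧ MProp G M ∧ ∀ e ∈ M, ∀ v ∈ e, v ≠ u} +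
      Nat.card {M : Finset (Sym2 V) // M.card = r ∧ MProp G M ∧ ∀ e ∈ M, ∀ v ∈ e, v ≠ w} := by
  classical
  set T := {M : Finset (Sym2 V) // M.card = r + 1 ∧ MProp G M} with hT
  set P : T → Prop := fun M => s(u, w) ∈ M.1 with hP
  haveI : Finite T := Subtype.finite
  have h1 : Nat.card T = Nat.card {x : T // ¬ P x} + Nat.card {x : T // P x} := by
    rw [← Nat.card_sum]
    exact (Nat.card_congr ((Equiv.sumComm _ _).trans (Equiv.sumCompl P))).symm
  rw [h1]
  congr 1
  · -- avoid u part
    apply Nat.card_congr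
    refine ⟨fun x => ⟨x.1.1, x.1.2.1, x.1.2.2, ?_⟩, fun y => ⟨⟨y.1, y.2.1, y.2.2.1⟩, ?_⟩,
      fun x => rfl, fun y => rfl⟩
    · intro e he v hve heq
      have hE := leaf_edge hleaf (x.1.2.2.1 (Finset.mem_coe.mpr he)) (heq ▸ hve)
      exact x.2 (by simp only [hP]; exact hE ▸ he)
    · intro hmem
      exact y.2.2.2 _ hmem u (by simp) rfl
  · -- contains s(u,w) part
    apply Nat.card_congr
    have hsymm : Symmetric (fun (e f : Sym2 V) => ∀ v : V, v ∈ e → v ∉ f) :=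
      fun e f hef v hvf hve => hef v hve hvf
    refine ⟨fun x => ⟨x.1.1.erase s(u, w), ?_, ⟨?_, ?_⟩, ?_⟩,
      fun y => ⟨⟨insert s(u, w) y.1, ?_, ?_, ?_⟩, Finset.mem_insert_self _ _⟩, ?_, ?_⟩
    · rw [Finset.card_erase_of_mem x.2, x.1.2.1]
      omega
    · intro e he
      exact x.1.2.2.1 (Finset.mem_coe.mpr (Finset.mem_of_mem_erase (Finset.mem_coe.mp he)))
    · exact x.1.2.2.2.mono (Finset.coe_subset.mpr (Finset.erase_subset _ _))
    · intro e he v hve heq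
      exact x.1.2.2.2 (Finset.mem_coe.mpr (Finset.mem_of_mem_erase he))
        (Finset.mem_coe.mpr x.2) (Finset.ne_of_mem_erase he) w (heq ▸ hve) (by simp)
    · -- card of insert
      have hnm : s(u, w) ∉ y.1 := fun hmem => y.2.2.2 _ hmem w (by simp) rfl
      rw [Finset.card_insert_of_notMem hnm, y.2.1]
    · -- subset
      rw [Finset.coe_insert, Set.insert_subset_iff]
      exact ⟨G.mem_edgeSet.mpr h, y.2.2.1.1⟩
    · -- pairwise
      haveI : Std.Symm (fun (e f : Sym2 V) => ∀ v : V, v ∈ e → v ∉ f) := ⟨fun a b hab => hsymm hab⟩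
      rw [Finset.coe_insert, Set.pairwise_insert_of_symmetric]
      refine ⟨y.2.2.1.2, ?_⟩
      intro b hb _ v hv hvb
      rcases Sym2.mem_iff.mp hv with rfl | rfl
      · have hE := leaf_edge hleaf (y.2.2.1.1 (Finset.mem_coe.mpr hb)) hvb
        have hwb : w ∈ b := by rw [hE]; simp
        exact y.2.2.2 b hb w hwb rfl
      · exact y.2.2.2 b hb v hvb rfl
    · intro x
      apply Subtype.ext; apply Subtype.ext
      exact Finset.insert_erase x.2
    · intro y
      apply Subtype.ext
      have hnm : s(u, w) ∉ y.1 := fun hmem => y.2.2.2 _ hmem w (by simp) rfl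
      exact Finset.erase_insert hnm

end Key

lemma numMatchings_deleteVert [Finite V] (G : SimpleGraph V) (u : V) (r : ℕ) :
    numMatchings (deleteVert G u) r =
      Nat.card {M : Finset (Sym2 V) // M.card = r ∧ MProp G M ∧ ∀ e ∈ M, ∀ v ∈ e, v ≠ u} := by
  rw [numMatchings_def]
  show Nat.card {M : Finset (Sym2 ↥({u}ᶜ : Set V)) // M.card = r ∧ MProp (G.induce _) M} = _
  rw [transfer_aux]
  apply Nat.card_congr (Equiv.subtypeEquivRight _)
  intro M
  simp only [Set.mem_compl_iff, Set.mem_singleton_iff]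

theorem numMatchings_rec [Finite V] {G : SimpleGraph V} {u w : V} (h : G.Adj u w)
    (hleaf : ∀ x, G.Adj u x → x = w) (r : ℕ) :
    numMatchings G (r + 1) =
      numMatchings (deleteVert G u) (r + 1) + numMatchings (deleteVert G w) r := by
  rw [numMatchings_def, numMatchings_deleteVert, numMatchings_deleteVert]
  exact numMatchings_rec' h hleaf r

lemma card_compl_singleton [Finite V] (v : V) :
    Nat.card ↥({v}ᶜ : Set V) = Nat.card V - 1 := by
  classical
  cases nonempty_fintype V
  rw [Nat.card_eq_fintype_card, Nat.card_eq_fintype_card, Fintype.card_compl_set]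
  simp

lemma eval_matchingPoly (G : SimpleGraph V) (θ : ℝ) :
    eval θ (matchingPoly G) = ∑ r ∈ Finset.range (Nat.card V + 1),
      (-1 : ℝ) ^ r * (numMatchings G r : ℝ) * θ ^ (Nat.card V - 2 * r) := by
  rw [matchingPoly, Polynomial.eval_finset_sum]
  exact Finset.sum_congr rfl fun r _ => by simp

theorem key_eval [Finite V] {G : SimpleGraph V} {u w : V} (h : G.Adj u w)
    (hleaf : ∀ x, G.Adj u x → x = w) (θ : ℝ) :
    θ ^ (Nat.card V + 1) * eval θ (matchingPoly G)
      + θ ^ (Nat.card V) * eval θ (matchingPoly (deleteVert G w))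
      = θ ^ (Nat.card V + 2) * eval θ (matchingPoly (deleteVert G u)) := by
  classical
  haveI : Nonempty V := ⟨u⟩
  have hn1 : 1 ≤ Nat.card V := Nat.card_pos (α := V)
  set n := Nat.card V with hn
  have hcu : Nat.card ↥({u}ᶜ : Set V) = n - 1 := card_compl_singleton u
  have hcw : Nat.card ↥({w}ᶜ : Set V) = n - 1 := card_compl_singleton w
  have hsub : n - 1 + 1 = n := by omega
  rw [eval_matchingPoly, eval_matchingPoly, eval_matchingPoly, hcu, hcw, hsub]
  rw [Finset.mul_sum, Finset.mul_sum, Finset.mul_sum]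
  have L1 : ∀ r ∈ Finset.range (n+1),
      θ^(n+1) * ((-1 : ℝ)^r * (numMatchings G r : ℝ) * θ^(n - 2*r)) =
      (-1 : ℝ)^r * (numMatchings G r : ℝ) * θ^(2*(n-r)+1) := by
    intro r _
    by_cases hb : 2*r ≤ n
    · rw [show 2*(n-r)+1 = (n+1) + (n - 2*r) from by omega, pow_add]
      ring
    · rw [numMatchings_eq_zero (by omega)]
      simp
  have L2 : ∀ r ∈ Finset.range n,
      θ^n * ((-1 : ℝ)^r * (numMatchings (deleteVert G w) r : ℝ) * θ^(n - 1 - 2*r)) =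
      (-1 : ℝ)^r * (numMatchings (deleteVert G w) r : ℝ) * θ^(2*(n-1-r)+1) := by
    intro r _
    by_cases hb : 2*r ≤ n - 1
    · rw [show 2*(n-1-r)+1 = n + (n - 1 - 2*r) from by omega, pow_add]
      ring
    · rw [numMatchings_eq_zero (by rw [hcw]; omega)]
      simp
  have L3 : ∀ r ∈ Finset.range n,
      θ^(n+2) * ((-1 : ℝ)^r * (numMatchings (deleteVert G u) r : ℝ) * θ^(n - 1 - 2*r)) =
      (-1 : ℝ)^r * (numMatchings (deleteVert G u) r : ℝ) * θ^(2*(n-r)+1) := by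
    intro r hr
    rw [Finset.mem_range] at hr
    by_cases hb : 2*r ≤ n - 1
    · rw [show 2*(n-r)+1 = (n+2) + (n - 1 - 2*r) from by omega, pow_add]
      ring
    · rw [numMatchings_eq_zero (by rw [hcu]; omega)]
      simp
  rw [Finset.sum_congr rfl L1, Finset.sum_congr rfl L2, Finset.sum_congr rfl L3]
  -- extend RHS to range (n+1)
  have hDn : (-1 : ℝ)^n * (numMatchings (deleteVert G u) n : ℝ) * θ^(2*(n-n)+1) = 0 := by
    rw [numMatchings_eq_zero (by rw [hcu]; omega)]
    simp
  rw [show (Finset.range n).sum (fun r => (-1 : ℝ)^r * (numMatchings (deleteVert G u) r : ℝ) * θ^(2*(n-r)+1))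
      = (Finset.range (n+1)).sum (fun r => (-1 : ℝ)^r * (numMatchings (deleteVert G u) r : ℝ) * θ^(2*(n-r)+1))
      from by rw [Finset.sum_range_succ, hDn, add_zero]]
  rw [Finset.sum_range_succ' (fun r => (-1 : ℝ)^r * (numMatchings G r : ℝ) * θ^(2*(n-r)+1)) n]
  rw [Finset.sum_range_succ' (fun r => (-1 : ℝ)^r * (numMatchings (deleteVert G u) r : ℝ) * θ^(2*(n-r)+1)) n]
  rw [numMatchings_zero, numMatchings_zero, add_right_comm, ← Finset.sum_add_distrib]
  congr 1
  refine Finset.sum_congr rfl fun r hr => ?_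
  rw [Finset.mem_range] at hr
  have hrec : (numMatchings G (r+1) : ℝ) =
      (numMatchings (deleteVert G u) (r+1) : ℝ) + (numMatchings (deleteVert G w) r : ℝ) := by
    rw [← Nat.cast_add, numMatchings_rec h hleaf r]
  have hexp : 2*(n-(r+1))+1 = 2*(n-1-r)+1 := by omega
  rw [hexp, hrec, pow_succ]
  ring

section Coeff
variable [Finite V] (G : SimpleGraph V)

lemma matchingPoly_coeff (k : ℕ) :
    (matchingPoly G).coeff k =
      ∑ r ∈ Finset.range (Nat.card V + 1),
        if Nat.card V - 2 * r = k then (-1 : ℝ) ^ r * (numMatchings G r : ℝ) else 0 := by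
  rw [matchingPoly, finset_sum_coeff]
  refine Finset.sum_congr rfl fun r _ => ?_
  rw [coeff_C_mul, coeff_X_pow]
  by_cases h : Nat.card V - 2*r = k
  · simp [h]
  · simp [h, Ne.symm h]

lemma matchingPoly_coeff_card : (matchingPoly G).coeff (Nat.card V) = 1 := by
  rw [matchingPoly_coeff]
  rw [Finset.sum_eq_single 0]
  · simp [numMatchings_zero]
  · intro r hr hr0
    rcases Nat.lt_or_ge (Nat.card V) (2*r) with h2 | h2
    · simp [numMatchings_eq_zero h2]
    · rw [if_neg]
      intro hc
      omega
  · intro h0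
    exact absurd (Finset.mem_range.mpr (by omega)) h0

lemma matchingPoly_ne_zero : matchingPoly G ≠ 0 := by
  intro h
  have := matchingPoly_coeff_card G
  rw [h, coeff_zero] at this
  exact zero_ne_one this

lemma matchingPoly_coeff_zero_even {k : ℕ} (hk : Nat.card V = 2 * k) :
    (matchingPoly G).coeff 0 = (-1 : ℝ) ^ k * (numMatchings G k : ℝ) := by
  rw [matchingPoly_coeff]
  rw [Finset.sum_eq_single k]
  · rw [if_pos (by omega)]
  · intro r hr hrk
    rw [Finset.mem_range] at hr
    rcases Nat.lt_or_ge (Nat.card V) (2*r) with h2 | h2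
    · simp [numMatchings_eq_zero h2]
    · rw [if_neg]; omega
  · intro h0
    exact absurd (Finset.mem_range.mpr (by omega)) h0

lemma matchingPoly_coeff_zero_odd {k : ℕ} (hk : Nat.card V = 2 * k + 1) :
    (matchingPoly G).coeff 0 = 0 := by
  rw [matchingPoly_coeff]
  refine Finset.sum_eq_zero fun r hr => ?_
  rcases Nat.lt_or_ge (Nat.card V) (2*r) with h2 | h2
  · simp [numMatchings_eq_zero h2]
  · rw [if_neg]; omega

lemma matchingPoly_coeff_one_odd {k : ℕ} (hk : Nat.card V = 2 * k + 1) :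
    (matchingPoly G).coeff 1 = (-1 : ℝ) ^ k * (numMatchings G k : ℝ) := by
  rw [matchingPoly_coeff]
  rw [Finset.sum_eq_single k]
  · rw [if_pos (by omega)]
  · intro r hr hrk
    rcases Nat.lt_or_ge (Nat.card V) (2*r) with h2 | h2
    · simp [numMatchings_eq_zero h2]
    · rw [if_neg]; omega
  · intro h0
    exact absurd (Finset.mem_range.mpr (by omega)) h0

lemma matchingPoly_of_card_zero (h : Nat.card V = 0) : matchingPoly G = 1 := by
  rw [matchingPoly, h]
  rw [Finset.sum_range_one]
  simp [numMatchings_zero]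

end Coeff

section PM
variable [Finite V] {G : SimpleGraph V}

lemma exists_finset_of_PM {M : G.Subgraph} (hM : M.IsPerfectMatching) :
    ∃ F : Finset (Sym2 V), MProp G F ∧ 2 * F.card = Nat.card V := by
  classical
  cases nonempty_fintype V
  have hadj := SimpleGraph.Subgraph.isPerfectMatching_iff.mp hM
  set F := (Set.toFinite M.edgeSet).toFinset with hFdef
  have hmem : ∀ e, e ∈ F ↔ e ∈ M.edgeSet := fun e => Set.Finite.mem_toFinset _
  have hMadj : ∀ e ∈ F, ∀ v ∈ e, ∃ x, M.Adj v x ∧ e = s(v, x) := by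
    intro e he v hv
    obtain ⟨y, rfl⟩ := Sym2.mem_iff_exists.mp hv
    exact ⟨y, SimpleGraph.Subgraph.mem_edgeSet.mp ((hmem _).mp he), rfl⟩
  have hprop : MProp G F := by
    constructor
    · intro e he
      exact M.edgeSet_subset ((hmem e).mp (Finset.mem_coe.mp he))
    · intro e he f hf hef v hve hvf
      obtain ⟨a, ha, rfl⟩ := hMadj e (Finset.mem_coe.mp he) v hve
      obtain ⟨b, hb, hfe⟩ := hMadj f (Finset.mem_coe.mp hf) v hvf
      have : a = b := (hadj v).unique ha hb
      exact hef (by rw [hfe, this])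
  refine ⟨F, hprop, ?_⟩
  have huniv : F.biUnion eVerts = Finset.univ := by
    refine Finset.eq_univ_of_forall fun v => ?_
    obtain ⟨x, hx, -⟩ := hadj v
    refine Finset.mem_biUnion.mpr ⟨s(v, x), (hmem _).mpr ?_, mem_eVerts.mpr (by simp)⟩
    exact SimpleGraph.Subgraph.mem_edgeSet.mpr hx
  rw [← card_biUnion_eVerts hprop, huniv, Nat.card_eq_fintype_card]
  rfl


lemma finset_cover {F : Finset (Sym2 V)} (hF : MProp G F)
    (hcard : 2 * F.card = Nat.card V) : ∀ v : V, ∃ e ∈ F, v ∈ e := by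
  classical
  cases nonempty_fintype V
  have hbi : (F.biUnion eVerts).card = 2 * F.card := card_biUnion_eVerts hF
  have huniv : F.biUnion eVerts = Finset.univ :=
    Finset.eq_univ_of_card _ (by rw [hbi, hcard, Nat.card_eq_fintype_card])
  intro v
  have : v ∈ F.biUnion eVerts := huniv ▸ Finset.mem_univ v
  obtain ⟨e, he, hv⟩ := Finset.mem_biUnion.mp this
  exact ⟨e, he, mem_eVerts.mp hv⟩

lemma PM_of_finset {F : Finset (Sym2 V)} (hF : MProp G F)
    (hcard : 2 * F.card = Nat.card V) : ∃ M : G.Subgraph, M.IsPerfectMatching := by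
  classical
  cases nonempty_fintype V
  have hbi : (F.biUnion eVerts).card = 2 * F.card := card_biUnion_eVerts hF
  have huniv : F.biUnion eVerts = Finset.univ :=
    Finset.eq_univ_of_card _ (by rw [hbi, hcard, Nat.card_eq_fintype_card])
  have hcover : ∀ v : V, ∃ e ∈ F, v ∈ e := by
    intro v
    have : v ∈ F.biUnion eVerts := huniv ▸ Finset.mem_univ v
    obtain ⟨e, he, hv⟩ := Finset.mem_biUnion.mp this
    exact ⟨e, he, mem_eVerts.mp hv⟩
  refine ⟨⟨Set.univ, fun a b => s(a, b) ∈ F, ?_, fun _ => Set.mem_univ _, ?_⟩, ?_⟩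
  · intro a b hab
    exact G.mem_edgeSet.mp (hF.1 hab)
  · refine ⟨fun a b hab => ?_⟩
    rwa [Sym2.eq_swap] at hab
  · rw [SimpleGraph.Subgraph.isPerfectMatching_iff]
    intro v
    obtain ⟨e, he, hv⟩ := hcover v
    obtain ⟨y, rfl⟩ := Sym2.mem_iff_exists.mp hv
    refine ⟨y, he, ?_⟩
    intro z hz
    have heq : s(v, z) = s(v, y) := by
      by_contra hne
      exact hF.2 (Finset.mem_coe.mpr hz) (Finset.mem_coe.mpr he) hne v (by simp) (by simp)
    exact Sym2.congr_right.mp heq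

end PM

section Mult
variable [Finite V]

lemma mult_eq_zero_iff (G : SimpleGraph V) (θ : ℝ) :
    mult θ G = 0 ↔ eval θ (matchingPoly G) ≠ 0 := by
  rw [mult]
  constructor
  · intro h he
    have := rootMultiplicity_pos'.mpr ⟨matchingPoly_ne_zero G, he⟩
    omega
  · intro he
    by_contra h
    exact he (rootMultiplicity_pos'.mp (Nat.pos_of_ne_zero h)).2

lemma eval_eq_zero_of_mult_pos {G : SimpleGraph V} {θ : ℝ} (h : mult θ G = 1) :
    eval θ (matchingPoly G) = 0 :=
  (rootMultiplicity_pos'.mp (by rw [mult] at h; omega)).2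

lemma mult_zero_eq_one {G : SimpleGraph V} (h0 : (matchingPoly G).coeff 0 = 0)
    (h1 : (matchingPoly G).coeff 1 ≠ 0) : mult 0 G = 1 := by
  rw [mult, rootMultiplicity_eq_natTrailingDegree']
  have hne : matchingPoly G ≠ 0 := matchingPoly_ne_zero G
  have hle := natTrailingDegree_le_of_ne_zero h1
  have hne0 := natTrailingDegree_ne_zero.mpr ⟨hne, h0⟩
  omega

end Mult

lemma exists_leaf [Fintype V] {T : SimpleGraph V} (hT : T.IsTree)
    (h2 : 2 ≤ Fintype.card V) :
    ∃ u w, T.Adj u w ∧ ∀ x, T.Adj u x → x = w := by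
  classical
  letI : DecidableRel T.Adj := Classical.decRel _
  haveI : Nontrivial V := Fintype.one_lt_card_iff_nontrivial.mp (by omega)
  have hE : T.edgeFinset.card + 1 = Fintype.card V := hT.card_edgeFinset
  have hsum : ∑ v : V, T.degree v = 2 * T.edgeFinset.card :=
    T.sum_degrees_eq_twice_card_edges
  have hex : ∃ u : V, T.degree u ≤ 1 := by
    by_contra hno
    push_neg at hno
    have hle := Finset.card_nsmul_le_sum Finset.univ (fun v => T.degree v) 2
      (fun x _ => hno x)
    simp only [smul_eq_mul, Finset.card_univ] at hle
    omega
  obtain ⟨u, hu⟩ := hex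
  obtain ⟨y, hy⟩ := exists_ne u
  have hreach := hT.isConnected.preconnected u y
  obtain ⟨p⟩ := hreach
  have hadj : ∃ z, T.Adj u z := by
    cases p with
    | nil => exact absurd rfl hy.symm
    | cons ha _ => exact ⟨_, ha⟩
  obtain ⟨z, hz⟩ := hadj
  have hcardn : (T.neighborFinset u).card = T.degree u :=
    T.card_neighborFinset_eq_degree u
  have hdeg : T.degree u = 1 := by
    have hpos : 0 < (T.neighborFinset u).card :=
      Finset.card_pos.mpr ⟨z, by simp [SimpleGraph.mem_neighborFinset, hz]⟩
    rw [hcardn] at hpos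
    omega
  obtain ⟨w, hw⟩ := Finset.card_eq_one.mp (by rw [hcardn]; exact hdeg)
  refine ⟨u, w, ?_, ?_⟩
  · have hmem : w ∈ T.neighborFinset u := by rw [hw]; simp
    simpa [SimpleGraph.mem_neighborFinset] using hmem
  · intro x hx
    have hmem : x ∈ T.neighborFinset u := by simp [SimpleGraph.mem_neighborFinset, hx]
    rw [hw] at hmem
    simpa using hmem


/-- A tree is θ-super positive iff θ = 0 and it has a perfect matching. -/
theorem stmt_1 {V : Type*} [Fintype V] (θ : ℝ) (T : SimpleGraph V) (hT : T.IsTree) :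
    IsSuperPositive θ T ↔ θ = 0 ∧ ∃ M : T.Subgraph, M.IsPerfectMatching := by
  classical
  constructor
  · rintro ⟨h0, h1⟩
    haveI : Nonempty V := hT.isConnected.nonempty
    have hn1 : 1 ≤ Nat.card V := Nat.card_pos
    have hθ : θ = 0 := by
      by_cases hcard : Nat.card V = 1
      · obtain ⟨v⟩ := ‹Nonempty V›
        have hzero : Nat.card ↥({v}ᶜ : Set V) = 0 := by
          rw [card_compl_singleton]; omega
        have hv := h1 v
        rw [mult, matchingPoly_of_card_zero _ hzero,
          rootMultiplicity_eq_zero (by simp [IsRoot])] at hv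
        omega
      · have h2 : 2 ≤ Fintype.card V := by rw [← Nat.card_eq_fintype_card]; omega
        obtain ⟨u, w, huw, hleaf⟩ := exists_leaf hT h2
        have hid := key_eval huw hleaf θ
        have hru : eval θ (matchingPoly (deleteVert T u)) = 0 :=
          eval_eq_zero_of_mult_pos (h1 u)
        have hrw : eval θ (matchingPoly (deleteVert T w)) = 0 :=
          eval_eq_zero_of_mult_pos (h1 w)
        have hG : eval θ (matchingPoly T) ≠ 0 := (mult_eq_zero_iff _ _).mp h0
        rw [hru, hrw, mul_zero, mul_zero, add_zero] at hid
        rcases mul_eq_zero.mp hid with hp | hE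
        · exact pow_eq_zero_iff (by omega) |>.mp hp
        · exact absurd hE hG
    subst hθ
    refine ⟨rfl, ?_⟩
    have hG : (matchingPoly T).coeff 0 ≠ 0 := by
      rw [coeff_zero_eq_eval_zero]
      exact (mult_eq_zero_iff _ _).mp h0
    rcases Nat.even_or_odd (Nat.card V) with ⟨k, hk⟩ | ⟨k, hk⟩
    · rw [matchingPoly_coeff_zero_even T (k := k) (by omega)] at hG
      have hpk : numMatchings T k ≠ 0 := by
        intro hz; rw [hz] at hG; simp at hG
      rw [numMatchings_def] at hpk
      have hne : Nonempty {M : Finset (Sym2 V) // M.card = k ∧ MProp T M} :=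
        Nat.card_ne_zero.mp hpk |>.1
      obtain ⟨F, hFc, hFp⟩ := hne
      exact PM_of_finset hFp (by omega)
    · rw [matchingPoly_coeff_zero_odd T (k := k) (by omega)] at hG
      exact absurd rfl hG
  · rintro ⟨rfl, M, hM⟩
    obtain ⟨F, hF, hcard⟩ := exists_finset_of_PM hM
    constructor
    · rw [mult_eq_zero_iff, ← coeff_zero_eq_eval_zero,
        matchingPoly_coeff_zero_even T (k := F.card) (by omega)]
      have : numMatchings T F.card ≠ 0 := by
        rw [numMatchings_def]
        have : Nonempty {M : Finset (Sym2 V) // M.card = F.card ∧ MProp T M} := ⟨⟨F, rfl, hF⟩⟩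
        exact Nat.card_ne_zero.mpr ⟨this, inferInstance⟩
      intro hE
      rcases mul_eq_zero.mp hE with h' | h'
      · exact pow_ne_zero _ (by norm_num) h'
      · exact this (by exact_mod_cast h')
    · intro v
      haveI : Nonempty V := ⟨v⟩
      have hn1 : 1 ≤ Nat.card V := Nat.card_pos
      have hF1 : 1 ≤ F.card := by omega
      have hodd : Nat.card ↥({v}ᶜ : Set V) = 2 * (F.card - 1) + 1 := by
        rw [card_compl_singleton]; omega
      apply mult_zero_eq_one
      · exact matchingPoly_coeff_zero_odd _ hodd
      · rw [matchingPoly_coeff_one_odd _ hodd]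
        have hp : numMatchings (deleteVert T v) (F.card - 1) ≠ 0 := by
          rw [numMatchings_deleteVert]
          obtain ⟨e0, he0, hv0⟩ := finset_cover hF hcard v
          have hne : Nonempty {M : Finset (Sym2 V) // M.card = F.card - 1 ∧ MProp T M ∧
              ∀ e ∈ M, ∀ x ∈ e, x ≠ v} := by
            refine ⟨⟨F.erase e0, Finset.card_erase_of_mem he0, ⟨?_, ?_⟩, ?_⟩⟩
            · intro e he
              exact hF.1 (Finset.mem_coe.mpr
                (Finset.mem_of_mem_erase (Finset.mem_coe.mp he)))
            · exact hF.2.mono (Finset.coe_subset.mpr (Finset.erase_subset _ _))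
            · intro e he x hx hxv
              exact hF.2 (Finset.mem_coe.mpr (Finset.mem_of_mem_erase he))
                (Finset.mem_coe.mpr he0) (Finset.ne_of_mem_erase he) v (hxv ▸ hx) hv0
          exact Nat.card_ne_zero.mpr ⟨hne, inferInstance⟩
        intro hE
        rcases mul_eq_zero.mp hE with h' | h'
        · exact pow_ne_zero _ (by norm_num) h'
        · exact hp (by exact_mod_cast h')


end MatchPoly
end

section
/- Let G be a θ-super positive graph, where θ is a real number. Then for every vertex v of G, the graph G\v has no θ-neutral vertex, i.e., N_θ(G\v)=∅. -/
open Polynomial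

namespace MatchPoly

variable {V : Type*}

section Aux

set_option linter.unusedSectionVars false

variable {Vp : Type*} [Fintype Vp] [DecidableEq Vp]

/-- `M` is a matching of `G` with all endpoints in `S`. -/
def IsM (G : SimpleGraph Vp) (S : Finset Vp) (M : Finset (Sym2 Vp)) : Prop :=
  (M : Set (Sym2 Vp)) ⊆ G.edgeSet ∧ (∀ e ∈ M, ∀ x ∈ e, x ∈ S) ∧
    (M : Set (Sym2 Vp)).Pairwise fun e f => ∀ x : Vp, x ∈ e → x ∉ f

noncomputable def pm (G : SimpleGraph Vp) (S : Finset Vp) (r : ℕ) : ℕ :=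
  Nat.card {M : Finset (Sym2 Vp) // M.card = r ∧ IsM G S M}

noncomputable def mp (G : SimpleGraph Vp) (S : Finset Vp) : Polynomial ℝ :=
  ∑ r ∈ Finset.range (S.card + 1),
    Polynomial.C ((-1 : ℝ) ^ r * (pm G S r : ℝ)) * (Polynomial.X : Polynomial ℝ) ^ (S.card - 2 * r)

variable {G : SimpleGraph Vp} {S : Finset Vp} {M : Finset (Sym2 Vp)}

open Classical in
lemma pm_def (G : SimpleGraph Vp) (S : Finset Vp) (r : ℕ) :
    pm G S r = (Finset.univ.filter fun M : Finset (Sym2 Vp) => M.card = r ∧ IsM G S M).card := by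
  rw [pm, Nat.card_eq_fintype_card]
  convert Fintype.card_subtype _

lemma isM_empty (G : SimpleGraph Vp) (S : Finset Vp) : IsM G S ∅ := by
  refine ⟨by simp, by simp, by simp⟩

lemma pm_zero (G : SimpleGraph Vp) (S : Finset Vp) : pm G S 0 = 1 := by
  classical
  rw [pm_def]
  have : (Finset.univ.filter fun M : Finset (Sym2 Vp) => M.card = 0 ∧ IsM G S M) = {∅} := by
    ext M
    simp only [Finset.mem_filter, Finset.mem_univ, true_and, Finset.mem_singleton,
      Finset.card_eq_zero]
    constructor
    · rintro ⟨h, -⟩; exact h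
    · rintro rfl; exact ⟨rfl, isM_empty G S⟩
  rw [this, Finset.card_singleton]

lemma IsM.erase (h : IsM G S M) {e : Sym2 Vp} (he : e ∈ M) {a b : Vp} (hab : s(a,b) = e) :
    IsM G ((S.erase a).erase b) (M.erase e) := by
  obtain ⟨h1, h2, h3⟩ := h
  refine ⟨fun f hf => h1 (by simpa using (Finset.mem_of_mem_erase (by exact_mod_cast hf))), ?_, ?_⟩
  · intro f hf x hx
    have hfM : f ∈ M := Finset.mem_of_mem_erase hf
    have hfe : f ≠ e := Finset.ne_of_mem_erase hf
    have hxe : x ∉ e := h3 (by exact_mod_cast hfM) (by exact_mod_cast he) hfe x hx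
    have hxS : x ∈ S := h2 f hfM x hx
    have hxa : x ≠ a := fun hx' => hxe (by rw [hx', ← hab]; exact Sym2.mem_mk_left a b)
    have hxb : x ≠ b := fun hx' => hxe (by rw [hx', ← hab]; exact Sym2.mem_mk_right a b)
    exact Finset.mem_erase.2 ⟨hxb, Finset.mem_erase.2 ⟨hxa, hxS⟩⟩
  · exact h3.mono (by exact_mod_cast Finset.erase_subset e M)

lemma IsM.two_mul_card_le : ∀ (r : ℕ) (S : Finset Vp) (M : Finset (Sym2 Vp)), M.card = r →
    IsM G S M → 2 * r ≤ S.card := by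
  intro r
  induction r with
  | zero => intro S M _ _; omega
  | succ n ih =>
    intro S M hcard h
    have hne : M.Nonempty := by rw [← Finset.card_pos, hcard]; omega
    obtain ⟨e, he⟩ := hne
    obtain ⟨a, ha⟩ : ∃ a, a ∈ e := ⟨e.out.1, Sym2.out_fst_mem e⟩
    set b := Sym2.Mem.other ha with hb
    have hab : s(a, b) = e := Sym2.other_spec ha
    have hbe : b ∈ e := Sym2.other_mem ha
    have hanb : a ≠ b := by
      intro hh
      have := SimpleGraph.not_isDiag_of_mem_edgeSet G (h.1 (by exact_mod_cast he))
      rw [← hab, Sym2.mk_isDiag_iff] at this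
      exact this hh
    have haS : a ∈ S := h.2.1 e he a ha
    have hbS : b ∈ S := h.2.1 e he b hbe
    have h' := h.erase he hab
    have hc : (M.erase e).card = n := by rw [Finset.card_erase_of_mem he]; omega
    have := ih ((S.erase a).erase b) (M.erase e) hc h'
    have hbS' : b ∈ S.erase a := Finset.mem_erase.2 ⟨hanb.symm, hbS⟩
    rw [Finset.card_erase_of_mem hbS', Finset.card_erase_of_mem haS] at this
    have h1 : 1 ≤ (S.erase a).card := Finset.card_pos.2 ⟨b, hbS'⟩
    rw [Finset.card_erase_of_mem haS] at h1
    omega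


lemma pm_eq_zero (G : SimpleGraph Vp) {S : Finset Vp} {r : ℕ} (h : S.card < 2 * r) :
    pm G S r = 0 := by
  classical
  rw [pm_def, Finset.card_eq_zero, Finset.filter_eq_empty_iff]
  rintro M - ⟨hc, hM⟩
  exact absurd (IsM.two_mul_card_le r S M hc hM) (by omega)


lemma isM_erase_iff {u : Vp} :
    IsM G (S.erase u) M ↔ IsM G S M ∧ ∀ e ∈ M, u ∉ e := by
  constructor
  · intro h
    refine ⟨⟨h.1, fun e he x hx => Finset.mem_of_mem_erase (h.2.1 e he x hx), h.2.2⟩,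
      fun e he hu => ?_⟩
    exact (Finset.notMem_erase u S) (h.2.1 e he u hu)
  · rintro ⟨h, hp⟩
    exact ⟨h.1, fun e he x hx => Finset.mem_erase.2
      ⟨fun hxu => hp e he (hxu ▸ hx), h.2.1 e he x hx⟩, h.2.2⟩

lemma isM_insert_edge {u w : Vp} {N : Finset (Sym2 Vp)}
    (hN : IsM G ((S.erase u).erase w) N) (hu : u ∈ S) (hw : w ∈ S) (hadj : G.Adj u w) :
    IsM G S (insert s(u,w) N) := by
  have hvert : ∀ f ∈ N, ∀ x ∈ f, x ≠ u ∧ x ≠ w ∧ x ∈ S := by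
    intro f hf x hx
    have := hN.2.1 f hf x hx
    simp only [Finset.mem_erase] at this
    exact ⟨this.2.1, this.1, this.2.2⟩
  refine ⟨?_, ?_, ?_⟩
  · intro e he
    simp only [Finset.coe_insert, Set.mem_insert_iff] at he
    rcases he with rfl | he
    · exact G.mem_edgeSet.2 hadj
    · exact hN.1 he
  · intro e he x hx
    rcases Finset.mem_insert.1 he with rfl | he
    · rcases Sym2.mem_iff.1 hx with rfl | rfl
      exacts [hu, hw]
    · exact (hvert e he x hx).2.2
  · intro e₁ h₁ e₂ h₂ hne x hx
    simp only [Finset.coe_insert, Set.mem_insert_iff, Finset.mem_coe] at h₁ h₂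
    rcases h₁ with rfl | h₁
    · rcases h₂ with rfl | h₂
      · exact absurd rfl hne
      · intro hx2
        rcases Sym2.mem_iff.1 hx with rfl | rfl
        · exact (hvert e₂ h₂ x hx2).1 rfl
        · exact (hvert e₂ h₂ x hx2).2.1 rfl
    · rcases h₂ with rfl | h₂
      · have := (hvert e₁ h₁ x hx)
        intro hx2
        rcases Sym2.mem_iff.1 hx2 with rfl | rfl
        · exact this.1 rfl
        · exact this.2.1 rfl
      · exact hN.2.2 h₁ h₂ hne x hx

lemma pm_succ [DecidableRel G.Adj] {u : Vp} (hu : u ∈ S) (r : ℕ) :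
    pm G S (r+1) = pm G (S.erase u) (r+1)
      + ∑ w ∈ (S.erase u).filter (G.Adj u), pm G ((S.erase u).erase w) r := by
  classical
  have hsplit := Finset.card_filter_add_card_filter_not
    (s := Finset.univ.filter fun M : Finset (Sym2 Vp) => M.card = r+1 ∧ IsM G S M)
    (p := fun M => ∀ e ∈ M, u ∉ e)
  rw [pm_def, ← hsplit]
  congr 1
  · -- uncovered part
    rw [pm_def]
    congr 1
    rw [Finset.filter_filter]
    apply Finset.filter_congr
    intro M _
    simp only [isM_erase_iff]
    tauto
  · -- covered part
    have hcov : (Finset.univ.filter fun M : Finset (Sym2 Vp) => M.card = r+1 ∧ IsM G S M).filter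
        (fun M => ¬ ∀ e ∈ M, u ∉ e)
        = ((S.erase u).filter (G.Adj u)).biUnion (fun w =>
            Finset.univ.filter fun M : Finset (Sym2 Vp) =>
              M.card = r+1 ∧ IsM G S M ∧ s(u,w) ∈ M) := by
      ext M
      simp only [Finset.mem_filter, Finset.mem_univ, true_and, Finset.mem_biUnion]
      constructor
      · rintro ⟨⟨hc, hM⟩, hne⟩
        push_neg at hne
        obtain ⟨e, he, hue⟩ := hne
        have hab : s(u, Sym2.Mem.other hue) = e := Sym2.other_spec hue
        set w := Sym2.Mem.other hue with hwdef
        have hin : s(u,w) ∈ M := by rw [hab]; exact he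
        have hadj : G.Adj u w := G.mem_edgeSet.1 (hM.1 (by exact_mod_cast hin))
        have hwS : w ∈ S := hM.2.1 _ hin w (Sym2.mem_mk_right u w)
        exact ⟨w, ⟨Finset.mem_erase.2 ⟨hadj.ne', hwS⟩, hadj⟩, hc, hM, hin⟩
      · rintro ⟨w, hw, hc, hM, hin⟩
        exact ⟨⟨hc, hM⟩, fun hall => hall _ hin (Sym2.mem_mk_left u w)⟩
    have hdisj : ∀ w ∈ (S.erase u).filter (G.Adj u), ∀ w' ∈ (S.erase u).filter (G.Adj u),
        w ≠ w' → Disjoint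
          (Finset.univ.filter fun M : Finset (Sym2 Vp) => M.card = r+1 ∧ IsM G S M ∧ s(u,w) ∈ M)
          (Finset.univ.filter fun M : Finset (Sym2 Vp) =>
            M.card = r+1 ∧ IsM G S M ∧ s(u,w') ∈ M) := by
      intro w _ w' _ hne
      simp only [Finset.disjoint_left, Finset.mem_filter, Finset.mem_univ, true_and]
      rintro M ⟨hc, hM, hin⟩ ⟨-, -, hin'⟩
      have hee : s(u,w) ≠ s(u,w') := fun h => hne (Sym2.congr_right.1 h)
      exact hM.2.2 (by exact_mod_cast hin) (by exact_mod_cast hin') hee u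
        (Sym2.mem_mk_left u w) (Sym2.mem_mk_left u w')
    rw [hcov, Finset.card_biUnion hdisj]
    apply Finset.sum_congr rfl
    intro w hw
    simp only [Finset.mem_filter, Finset.mem_erase] at hw
    obtain ⟨⟨hwu, hwS⟩, hadj⟩ := hw
    rw [pm_def]
    refine Finset.card_bij' (fun M _ => M.erase s(u,w)) (fun N _ => insert s(u,w) N)
      ?_ ?_ ?_ ?_
    · intro M hM
      simp only [Finset.mem_filter, Finset.mem_univ, true_and] at hM ⊢
      obtain ⟨hc, hM, hin⟩ := hM
      exact ⟨by rw [Finset.card_erase_of_mem hin, hc]; omega, hM.erase hin rfl⟩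
    · intro N hN
      simp only [Finset.mem_filter, Finset.mem_univ, true_and] at hN ⊢
      obtain ⟨hc, hN⟩ := hN
      have hnotin : s(u,w) ∉ N := by
        intro hin
        have := hN.2.1 _ hin u (Sym2.mem_mk_left u w)
        simp at this
      exact ⟨by rw [Finset.card_insert_of_notMem hnotin, hc],
        isM_insert_edge hN hu hwS hadj, Finset.mem_insert_self _ _⟩
    · intro M hM
      simp only [Finset.mem_filter, Finset.mem_univ, true_and] at hM
      exact Finset.insert_erase hM.2.2
    · intro N hN
      simp only [Finset.mem_filter, Finset.mem_univ, true_and] at hN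
      apply Finset.erase_insert
      intro hin
      have := hN.2.2.1 _ hin u (Sym2.mem_mk_left u w)
      simp at this

lemma mp_coeff_card (G : SimpleGraph Vp) (S : Finset Vp) : (mp G S).coeff S.card = 1 := by
  rw [mp, Polynomial.finset_sum_coeff]
  rw [Finset.sum_eq_single 0]
  · simp [pm_zero]
  · intro r hr hr0
    rw [Polynomial.coeff_C_mul, Polynomial.coeff_X_pow]
    have hr' : r ≤ S.card := Nat.lt_succ_iff.1 (Finset.mem_range.1 hr)
    have h1 : 1 ≤ r := Nat.one_le_iff_ne_zero.2 hr0
    have : ¬ (S.card - 2*r = S.card) := by omega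
    rw [if_neg (fun h => this h.symm), mul_zero]
  · intro h; simp at h

lemma mp_ne_zero (G : SimpleGraph Vp) (S : Finset Vp) : mp G S ≠ 0 := by
  intro h
  have := mp_coeff_card G S
  rw [h] at this
  simp at this

lemma mp_rec (G : SimpleGraph Vp) [DecidableRel G.Adj] {S : Finset Vp} {u : Vp} (hu : u ∈ S) :
    mp G S = Polynomial.X * mp G (S.erase u)
      - ∑ w ∈ (S.erase u).filter (G.Adj u), mp G ((S.erase u).erase w) := by
  classical
  have hs : 1 ≤ S.card := Finset.card_pos.2 ⟨u, hu⟩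
  have hcard : (S.erase u).card = S.card - 1 := Finset.card_erase_of_mem hu
  have hA : Polynomial.X * mp G (S.erase u)
      = ∑ r ∈ Finset.range (S.card + 1),
          Polynomial.C ((-1:ℝ)^r * (pm G (S.erase u) r : ℝ)) *
            Polynomial.X ^ (S.card - 2*r) := by
    rw [mp, Finset.mul_sum, hcard]
    have hrange : S.card - 1 + 1 = S.card := by omega
    rw [hrange, Finset.sum_range_succ _ S.card]
    have hlast : pm G (S.erase u) S.card = 0 := by
      apply pm_eq_zero
      rw [hcard]; omega
    rw [hlast]
    simp only [Nat.cast_zero, mul_zero, map_zero, zero_mul, add_zero]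
    apply Finset.sum_congr rfl
    intro r hr
    by_cases h2 : 2*r ≤ S.card - 1
    · rw [mul_comm Polynomial.X, mul_assoc, ← pow_succ]
      congr 2
      omega
    · have h0 : pm G (S.erase u) r = 0 := pm_eq_zero G (by omega)
      rw [h0]
      simp
  have hT : ∑ w ∈ (S.erase u).filter (G.Adj u), mp G ((S.erase u).erase w)
      = ∑ r ∈ Finset.range S.card, Polynomial.C ((-1:ℝ)^r *
          ∑ w ∈ (S.erase u).filter (G.Adj u), (pm G ((S.erase u).erase w) r : ℝ)) *
          Polynomial.X ^ (S.card - 2 - 2*r) := by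
    have h1 : ∀ w ∈ (S.erase u).filter (G.Adj u),
        mp G ((S.erase u).erase w) = ∑ r ∈ Finset.range S.card,
          Polynomial.C ((-1:ℝ)^r * (pm G ((S.erase u).erase w) r : ℝ)) *
            Polynomial.X ^ (S.card - 2 - 2*r) := by
      intro w hw
      have hw2 : w ∈ S.erase u := (Finset.mem_filter.1 hw).1
      have hs2 : 2 ≤ S.card := by
        have h' := Finset.card_pos.2 ⟨w, hw2⟩
        omega
      have hcard2 : ((S.erase u).erase w).card = S.card - 2 := by
        rw [Finset.card_erase_of_mem hw2, hcard]
        omega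
      rw [mp, hcard2]
      apply Finset.sum_subset
      · exact Finset.range_subset_range.2 (by omega)
      · intro r hr hnr
        rw [Finset.mem_range] at hr hnr
        have : pm G ((S.erase u).erase w) r = 0 := pm_eq_zero G (by omega)
        rw [this]
        simp
    rw [Finset.sum_congr rfl h1, Finset.sum_comm]
    apply Finset.sum_congr rfl
    intro r _
    rw [← Finset.sum_mul, ← map_sum, ← Finset.mul_sum]
  rw [hA, hT, mp, eq_sub_iff_add_eq]
  rw [Finset.sum_range_succ' _ S.card, Finset.sum_range_succ' _ S.card]
  simp only [pm_zero, Nat.cast_one, mul_one, pow_zero, mul_zero, Nat.sub_zero, map_one, one_mul]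
  rw [add_right_comm]
  congr 1
  rw [← Finset.sum_add_distrib]
  apply Finset.sum_congr rfl
  intro r hr
  have he : S.card - 2*(r+1) = S.card - 2 - 2*r := by omega
  rw [he, ← add_mul, ← map_add]
  congr 1
  congr 1
  have hps := congrArg (Nat.cast : ℕ → ℝ) (pm_succ (G := G) hu r)
  push_cast at hps
  rw [hps, pow_succ]
  ring

lemma mp_sq_nonneg (G : SimpleGraph Vp) [DecidableRel G.Adj] :
    ∀ (n : ℕ) (S : Finset Vp), S.card = n → ∀ u ∈ S, ∀ v ∈ S, u ≠ v → ∀ x : ℝ,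
    (mp G S).eval x * (mp G ((S.erase u).erase v)).eval x
      ≤ (mp G (S.erase u)).eval x * (mp G (S.erase v)).eval x := by
  intro n
  induction n with
  | zero =>
    intro S hS u hu
    exact absurd (Finset.card_pos.2 ⟨u, hu⟩) (by omega)
  | succ n ih =>
    intro S hS u hu v hv huv x
    have hvE : v ∈ S.erase u := Finset.mem_erase.2 ⟨Ne.symm huv, hv⟩
    have huF : u ∈ S.erase v := Finset.mem_erase.2 ⟨huv, hu⟩
    have h1 := mp_rec G hu
    have h2 := mp_rec G huF
    have hDF : (S.erase v).erase u = (S.erase u).erase v := Finset.erase_right_comm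
    rw [hDF, Finset.filter_erase] at h2
    set E := S.erase u with hE
    set D := (S.erase u).erase v with hD
    set W := E.filter (G.Adj u) with hWdef
    have hED : E.erase v = D := rfl
    have key : (mp G E).eval x * (mp G (S.erase v)).eval x
        - (mp G S).eval x * (mp G D).eval x
        = (∑ w ∈ W.erase v, ((mp G (E.erase w)).eval x * (mp G D).eval x
            - (mp G E).eval x * (mp G (D.erase w)).eval x))
          + (if v ∈ W then (mp G D).eval x ^ 2 else 0) := by
      rw [h1, h2]
      simp only [Polynomial.eval_sub, Polynomial.eval_mul, Polynomial.eval_X,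
        Polynomial.eval_finset_sum]
      by_cases hvW : v ∈ W
      · rw [if_pos hvW, ← Finset.add_sum_erase _ _ hvW, hED,
          Finset.sum_sub_distrib, ← Finset.sum_mul, ← Finset.mul_sum]
        ring
      · rw [if_neg hvW, Finset.erase_eq_of_notMem hvW,
          Finset.sum_sub_distrib, ← Finset.sum_mul, ← Finset.mul_sum]
        ring
    rw [← sub_nonneg, key]
    apply add_nonneg
    · apply Finset.sum_nonneg
      intro w hw
      rw [sub_nonneg]
      have hwW : w ∈ W := Finset.mem_of_mem_erase hw
      have hwv : w ≠ v := Finset.ne_of_mem_erase hw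
      have hwE : w ∈ E := (Finset.mem_filter.1 hwW).1
      have hcardE : E.card = n := by
        rw [hE, Finset.card_erase_of_mem hu, hS]
        omega
      have h3 := ih E hcardE w hwE v hvE hwv x
      have h4 : (E.erase w).erase v = D.erase w := Finset.erase_right_comm
      rw [h4, hED] at h3
      exact h3
    · split_ifs
      · positivity
      · exact le_refl 0

lemma numMatchings_eq_pm {W : Type*} [Fintype W] [DecidableEq W]
    (G : SimpleGraph Vp) (H : SimpleGraph W) (f : W → Vp) (hf : Function.Injective f)
    (hadj : ∀ a b, H.Adj a b ↔ G.Adj (f a) (f b)) (r : ℕ) :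
    numMatchings H r = pm G (Finset.univ.image f) r := by
  classical
  have hmapinj : Function.Injective (Sym2.map f) := Sym2.map.injective hf
  have hmape : ∀ e, e ∈ H.edgeSet → Sym2.map f e ∈ G.edgeSet := by
    intro e
    induction e using Sym2.ind with
    | _ a b =>
      intro he
      rw [Sym2.map_pair_eq]
      exact G.mem_edgeSet.2 ((hadj a b).1 (H.mem_edgeSet.1 he))
  have hmape' : ∀ e, Sym2.map f e ∈ G.edgeSet → e ∈ H.edgeSet := by
    intro e
    induction e using Sym2.ind with
    | _ a b =>
      intro he
      rw [Sym2.map_pair_eq] at he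
      exact H.mem_edgeSet.2 ((hadj a b).2 (G.mem_edgeSet.1 he))
  have h1 : numMatchings H r = (Finset.univ.filter fun M : Finset (Sym2 W) =>
      M.card = r ∧ (M : Set (Sym2 W)) ⊆ H.edgeSet ∧
      (M : Set (Sym2 W)).Pairwise fun e f => ∀ v : W, v ∈ e → v ∉ f).card := by
    rw [numMatchings, Nat.card_eq_fintype_card]
    convert Fintype.card_subtype _
  rw [h1, pm_def]
  refine Finset.card_bij' (fun M _ => M.image (Sym2.map f))
    (fun N _ => Finset.univ.filter (fun e => Sym2.map f e ∈ N)) ?_ ?_ ?_ ?_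
  · intro M hM
    simp only [Finset.mem_filter, Finset.mem_univ, true_and] at hM ⊢
    obtain ⟨hc, hsub, hpw⟩ := hM
    refine ⟨by rw [Finset.card_image_of_injective _ hmapinj, hc], ?_, ?_, ?_⟩
    · intro e' he'
      rw [Finset.mem_coe, Finset.mem_image] at he'
      obtain ⟨e, he, rfl⟩ := he'
      exact hmape e (hsub (Finset.mem_coe.2 he))
    · intro e' he' x hx
      rw [Finset.mem_image] at he'
      obtain ⟨e, he, rfl⟩ := he'
      rw [Sym2.mem_map] at hx
      obtain ⟨a, _, rfl⟩ := hx
      exact Finset.mem_image.2 ⟨a, Finset.mem_univ a, rfl⟩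
    · intro e₁' h₁ e₂' h₂ hne x hx₁ hx₂
      rw [Finset.mem_coe, Finset.mem_image] at h₁ h₂
      obtain ⟨e₁, he₁, rfl⟩ := h₁
      obtain ⟨e₂, he₂, rfl⟩ := h₂
      rw [Sym2.mem_map] at hx₁ hx₂
      obtain ⟨a₁, ha₁, rfl⟩ := hx₁
      obtain ⟨a₂, ha₂, heq⟩ := hx₂
      have ha : a₂ = a₁ := hf heq
      subst ha
      have hne' : e₁ ≠ e₂ := fun hh => hne (by rw [hh])
      exact hpw (Finset.mem_coe.2 he₁) (Finset.mem_coe.2 he₂) hne' a₂ ha₁ ha₂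
  · intro N hN
    simp only [Finset.mem_filter, Finset.mem_univ, true_and] at hN ⊢
    obtain ⟨hc, hsub, hvert, hpw⟩ := hN
    have himg : (Finset.univ.filter (fun e => Sym2.map f e ∈ N)).image (Sym2.map f) = N := by
      ext e'
      rw [Finset.mem_image]
      constructor
      · rintro ⟨e, he, rfl⟩
        exact (Finset.mem_filter.1 he).2
      · intro he'
        induction e' using Sym2.ind with
        | _ x y =>
          obtain ⟨a, -, rfl⟩ := Finset.mem_image.1 (hvert _ he' x (Sym2.mem_mk_left x y))
          obtain ⟨b, -, rfl⟩ := Finset.mem_image.1 (hvert _ he' y (Sym2.mem_mk_right (f a) y))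
          exact ⟨s(a, b), Finset.mem_filter.2 ⟨Finset.mem_univ _, by rw [Sym2.map_pair_eq]; exact he'⟩,
            by rw [Sym2.map_pair_eq]⟩
    refine ⟨?_, ?_, ?_⟩
    · rw [← Finset.card_image_of_injective (Finset.univ.filter fun e => Sym2.map f e ∈ N) hmapinj,
        himg, hc]
    · intro e he
      rw [Finset.mem_coe, Finset.mem_filter] at he
      exact hmape' e (hsub (Finset.mem_coe.2 he.2))
    · intro e₁ h₁ e₂ h₂ hne x hx₁ hx₂
      rw [Finset.mem_coe, Finset.mem_filter] at h₁ h₂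
      have hne' : Sym2.map f e₁ ≠ Sym2.map f e₂ := fun hh => hne (hmapinj hh)
      exact hpw (Finset.mem_coe.2 h₁.2) (Finset.mem_coe.2 h₂.2) hne' (f x)
        (Sym2.mem_map.2 ⟨x, hx₁, rfl⟩) (Sym2.mem_map.2 ⟨x, hx₂, rfl⟩)
  · intro M hM
    ext e
    simp only [Finset.mem_filter, Finset.mem_univ, true_and]
    constructor
    · intro he
      obtain ⟨e₀, he₀, heq⟩ := Finset.mem_image.1 he
      rwa [hmapinj heq] at he₀
    · intro he
      exact Finset.mem_image_of_mem _ he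
  · intro N hN
    simp only [Finset.mem_filter, Finset.mem_univ, true_and] at hN
    obtain ⟨hc, hsub, hvert, hpw⟩ := hN
    ext e'
    rw [Finset.mem_image]
    constructor
    · rintro ⟨e, he, rfl⟩
      exact (Finset.mem_filter.1 he).2
    · intro he'
      induction e' using Sym2.ind with
      | _ x y =>
        obtain ⟨a, -, rfl⟩ := Finset.mem_image.1 (hvert _ he' x (Sym2.mem_mk_left x y))
        obtain ⟨b, -, rfl⟩ := Finset.mem_image.1 (hvert _ he' y (Sym2.mem_mk_right (f a) y))
        exact ⟨s(a, b), Finset.mem_filter.2 ⟨Finset.mem_univ _, by rw [Sym2.map_pair_eq]; exact he'⟩,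
          by rw [Sym2.map_pair_eq]⟩

lemma matchingPoly_eq_mp {W : Type*} [Fintype W] [DecidableEq W]
    (G : SimpleGraph Vp) (H : SimpleGraph W) (f : W → Vp) (hf : Function.Injective f)
    (hadj : ∀ a b, H.Adj a b ↔ G.Adj (f a) (f b)) :
    matchingPoly H = mp G (Finset.univ.image f) := by
  have hcard : Nat.card W = (Finset.univ.image f).card := by
    rw [Nat.card_eq_fintype_card, Finset.card_image_of_injective _ hf, Finset.card_univ]
  rw [matchingPoly, mp, ← hcard]
  apply Finset.sum_congr rfl
  intro r _
  rw [numMatchings_eq_pm G H f hf hadj r]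

end Aux


/-- If G is θ-super positive then N_θ(G\v) = ∅ for every vertex v. -/
theorem stmt_4 {V : Type*} [Fintype V] (θ : ℝ) (G : SimpleGraph V)
    (h : IsSuperPositive θ G) (v : V) :
    neutralSet θ (deleteVert G v) = ∅ := by
  classical
  rw [Set.eq_empty_iff_forall_notMem]
  intro u hu
  have hneu : mult θ (deleteVert (deleteVert G v) u) = mult θ (deleteVert G v) := hu
  have hu'v : (u : V) ≠ v := Set.mem_compl_singleton_iff.1 u.2
  have himg : ∀ w : V, (Finset.univ.image (Subtype.val : ↥({w}ᶜ : Set V) → V))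
      = Finset.univ.erase w := by
    intro w
    ext x
    simp only [Finset.mem_image, Finset.mem_erase, Finset.mem_univ, and_true, true_and]
    constructor
    · rintro ⟨a, rfl⟩
      exact Set.mem_compl_singleton_iff.1 a.2
    · intro hx
      exact ⟨⟨x, Set.mem_compl_singleton_iff.2 hx⟩, rfl⟩
  have TP0 : matchingPoly G = mp G Finset.univ := by
    have := matchingPoly_eq_mp (G := G) (H := G) id Function.injective_id
      (fun a b => Iff.rfl)
    rwa [Finset.image_id] at this
  have TP1 : matchingPoly (deleteVert G v) = mp G (Finset.univ.erase v) := by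
    have := matchingPoly_eq_mp (G := G) (H := deleteVert G v) Subtype.val
      Subtype.val_injective (fun a b => Iff.rfl)
    rwa [himg v] at this
  have TP2 : matchingPoly (deleteVert G (u : V)) = mp G (Finset.univ.erase (u : V)) := by
    have := matchingPoly_eq_mp (G := G) (H := deleteVert G (u : V)) Subtype.val
      Subtype.val_injective (fun a b => Iff.rfl)
    rwa [himg (u : V)] at this
  have himg3 : (Finset.univ.image (fun a : ↥({u}ᶜ : Set ↥({v}ᶜ : Set V)) =>
      ((a : ↥({v}ᶜ : Set V)) : V))) = (Finset.univ.erase v).erase (u : V) := by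
    ext x
    simp only [Finset.mem_image, Finset.mem_erase, Finset.mem_univ, and_true, true_and]
    constructor
    · rintro ⟨a, rfl⟩
      refine ⟨fun hh => Set.mem_compl_singleton_iff.1 a.2 (Subtype.val_injective hh), ?_⟩
      exact Set.mem_compl_singleton_iff.1 a.1.2
    · rintro ⟨hxu, hxv⟩
      exact ⟨⟨⟨x, Set.mem_compl_singleton_iff.2 hxv⟩,
        Set.mem_compl_singleton_iff.2 (fun hh => hxu (congrArg Subtype.val hh))⟩, rfl⟩
  have TP3 : matchingPoly (deleteVert (deleteVert G v) u)
      = mp G ((Finset.univ.erase v).erase (u : V)) := by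
    have := matchingPoly_eq_mp (G := G) (H := deleteVert (deleteVert G v) u)
      (fun a => ((a : ↥({v}ᶜ : Set V)) : V))
      (Subtype.val_injective.comp Subtype.val_injective) (fun a b => Iff.rfl)
    rwa [himg3] at this
  set P0 := mp G Finset.univ with hP0def
  set P1 := mp G (Finset.univ.erase v) with hP1def
  set P2 := mp G (Finset.univ.erase (u : V)) with hP2def
  set P3 := mp G ((Finset.univ.erase v).erase (u : V)) with hP3def
  have rm0 : P0.rootMultiplicity θ = 0 := by rw [← TP0]; exact h.1
  have rm1 : P1.rootMultiplicity θ = 1 := by rw [← TP1]; exact h.2 v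
  have rm2 : P2.rootMultiplicity θ = 1 := by rw [← TP2]; exact h.2 (u : V)
  have rm3 : P3.rootMultiplicity θ = 1 := by rw [← TP3]; exact hneu.trans (h.2 v)
  have eval0 : P0.eval θ ≠ 0 := by
    intro h0
    have := (Polynomial.rootMultiplicity_pos (mp_ne_zero G Finset.univ)).2 h0
    rw [← hP0def] at this
    omega
  set d : Polynomial ℝ := Polynomial.X - Polynomial.C θ with hddef
  have hd1 : d ∣ P1 := by
    have := Polynomial.pow_rootMultiplicity_dvd P1 θ
    rwa [rm1, pow_one] at this
  have hd2 : d ∣ P2 := by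
    have := Polynomial.pow_rootMultiplicity_dvd P2 θ
    rwa [rm2, pow_one] at this
  have hd3 : d ∣ P3 := by
    have := Polynomial.pow_rootMultiplicity_dvd P3 θ
    rwa [rm3, pow_one] at this
  have hnd3 : ¬ d ^ 2 ∣ P3 := by
    intro hdvd
    have := (Polynomial.le_rootMultiplicity_iff (mp_ne_zero G _) (a := θ) (n := 2)).2 hdvd
    rw [← hP3def] at this
    omega
  have hdne : d ≠ 0 := Polynomial.X_sub_C_ne_zero θ
  have hndP0 : ¬ d ∣ P0 := by
    intro hdvd
    exact eval0 ((Polynomial.dvd_iff_isRoot).1 hdvd)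
  have hndB : ¬ d ^ 2 ∣ P0 * P3 := by
    intro hdvd
    obtain ⟨q, hq⟩ := hd3
    have h2 : d * d ∣ d * (P0 * q) := by
      rw [show d * (P0 * q) = P0 * (d * q) by ring, ← hq, ← pow_two]
      exact hdvd
    have h3 : d ∣ P0 * q := (mul_dvd_mul_iff_left hdne).1 h2
    have hdprime : Prime d := by rw [hddef]; exact Polynomial.prime_X_sub_C θ
    rcases hdprime.2.2 P0 q h3 with h4 | h4
    · exact hndP0 h4
    · apply hnd3
      rw [hq, pow_two]
      exact mul_dvd_mul_left d h4
  set f : Polynomial ℝ := P2 * P1 - P0 * P3 with hfdef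
  have hd2f : d ^ 2 ∣ P2 * P1 := by rw [pow_two]; exact mul_dvd_mul hd2 hd1
  have hdf : d ∣ f := by
    rw [hfdef]
    exact dvd_sub (dvd_mul_of_dvd_left hd2 P1) (dvd_mul_of_dvd_right hd3 P0)
  have hndf : ¬ d ^ 2 ∣ f := by
    intro hh
    apply hndB
    have hPP : P0 * P3 = P2 * P1 - f := by rw [hfdef]; ring
    rw [hPP]
    exact dvd_sub hd2f hh
  obtain ⟨g, hg⟩ := hdf
  have hgθ : g.eval θ ≠ 0 := by
    intro h0
    apply hndf
    rw [hg, pow_two]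
    exact mul_dvd_mul_left d (Polynomial.dvd_iff_isRoot.2 h0)
  letI : DecidableRel G.Adj := fun a b => Classical.propDecidable _
  have hfnonneg : ∀ x : ℝ, 0 ≤ f.eval x := by
    intro x
    have hmono := mp_sq_nonneg G Finset.univ.card Finset.univ rfl (u : V)
      (Finset.mem_univ _) v (Finset.mem_univ _) hu'v x
    have he : (Finset.univ.erase (u : V)).erase v = (Finset.univ.erase v).erase (u : V) :=
      Finset.erase_right_comm
    rw [he] at hmono
    rw [hfdef, Polynomial.eval_sub, Polynomial.eval_mul, Polynomial.eval_mul]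
    exact sub_nonneg.2 hmono
  have hcont : Continuous fun y : ℝ => g.eval y := Polynomial.continuous g
  obtain ⟨δ, hδpos, hδ⟩ := Metric.continuous_iff.1 hcont θ |g.eval θ| (abs_pos.2 hgθ)
  rcases lt_or_gt_of_ne hgθ with hneg | hpos
  · have hy : dist (θ + δ/2) θ < δ := by
      rw [Real.dist_eq, add_sub_cancel_left, abs_of_pos (by linarith)]
      linarith
    have hgy := hδ _ hy
    rw [Real.dist_eq] at hgy
    have hgy2 : g.eval (θ + δ/2) < 0 := by
      have habs := abs_lt.1 hgy
      rw [abs_of_neg hneg] at habs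
      linarith [habs.2]
    have hfy : f.eval (θ + δ/2) < 0 := by
      rw [hg, Polynomial.eval_mul]
      have hdy : d.eval (θ + δ/2) = δ/2 := by
        rw [hddef, Polynomial.eval_sub, Polynomial.eval_X, Polynomial.eval_C]
        ring
      rw [hdy]
      exact mul_neg_of_pos_of_neg (by linarith) hgy2
    exact absurd (hfnonneg _) (not_le.2 hfy)
  · have hy : dist (θ - δ/2) θ < δ := by
      rw [Real.dist_eq]
      rw [show θ - δ/2 - θ = -(δ/2) by ring, abs_neg, abs_of_pos (by linarith)]
      linarith
    have hgy := hδ _ hy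
    rw [Real.dist_eq] at hgy
    have hgy2 : 0 < g.eval (θ - δ/2) := by
      have habs := abs_lt.1 hgy
      rw [abs_of_pos hpos] at habs
      linarith [habs.1]
    have hfy : f.eval (θ - δ/2) < 0 := by
      rw [hg, Polynomial.eval_mul]
      have hdy : d.eval (θ - δ/2) = -(δ/2) := by
        rw [hddef, Polynomial.eval_sub, Polynomial.eval_X, Polynomial.eval_C]
        ring
      rw [hdy]
      exact mul_neg_of_neg_of_pos (by linarith) hgy2
    exact absurd (hfnonneg _) (not_le.2 hfy)

end MatchPoly
end

section
/- Let θ be a real number, let G be θ-super positive, and let e=(u,v) be an edge of G such that {u,v} is a θ-extreme set in G. Then the graph G−e obtained by deleting the edge e from G is θ-super positive. -/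
open Polynomial
set_option linter.unusedSectionVars false
set_option maxHeartbeats 1000000

namespace MatchPoly

variable {V : Type*}

section Dev

variable {V : Type*} [Fintype V] [DecidableEq V]


variable {V : Type*} [Fintype V] [DecidableEq V]

def IsMatchingIn (G : SimpleGraph V) (S : Finset V) (M : Finset (Sym2 V)) : Prop :=
  (M : Set (Sym2 V)) ⊆ G.edgeSet ∧ (∀ e ∈ M, ∀ v ∈ e, v ∈ S) ∧
  (M : Set (Sym2 V)).Pairwise fun e f => ∀ v : V, v ∈ e → v ∉ f

noncomputable def mFinset (G : SimpleGraph V) (S : Finset V) (r : ℕ) : Finset (Finset (Sym2 V)) :=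
  letI := Classical.decPred fun M : Finset (Sym2 V) => M.card = r ∧ IsMatchingIn G S M
  Finset.univ.filter fun M : Finset (Sym2 V) => M.card = r ∧ IsMatchingIn G S M

noncomputable def aux (G : SimpleGraph V) (S : Finset V) (r : ℕ) : ℕ := (mFinset G S r).card

noncomputable def apoly (G : SimpleGraph V) (S : Finset V) : Polynomial ℝ :=
  ∑ r ∈ Finset.range (S.card + 1),
    Polynomial.C ((-1 : ℝ) ^ r * (aux G S r : ℝ)) * Polynomial.X ^ (S.card - 2 * r)

lemma mem_mFinset {G : SimpleGraph V} {S : Finset V} {r : ℕ} {M : Finset (Sym2 V)} :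
    M ∈ mFinset G S r ↔ M.card = r ∧ IsMatchingIn G S M := by
  classical
  simp [mFinset, Finset.mem_filter]

def eFin (e : Sym2 V) : Finset V := Finset.univ.filter (· ∈ e)

@[simp] lemma mem_eFin {v : V} {e : Sym2 V} : v ∈ eFin e ↔ v ∈ e := by
  simp [eFin]

lemma eFin_card {e : Sym2 V} (h : ¬ e.IsDiag) : (eFin e).card = 2 := by
  induction e with
  | _ a b =>
    have hab : a ≠ b := by simpa using h
    have : eFin s(a, b) = {a, b} := by
      ext v; simp [Sym2.mem_iff]
    rw [this, Finset.card_insert_of_notMem (by simpa using hab), Finset.card_singleton]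


def msupp (M : Finset (Sym2 V)) : Finset V := M.biUnion eFin

lemma mem_msupp {v : V} {M : Finset (Sym2 V)} : v ∈ msupp M ↔ ∃ e ∈ M, v ∈ e := by
  simp [msupp]

lemma aux_zero (G : SimpleGraph V) (S : Finset V) : aux G S 0 = 1 := by
  have : mFinset G S 0 = {∅} := by
    ext M
    simp only [mem_mFinset, Finset.card_eq_zero, Finset.mem_singleton]
    constructor
    · rintro ⟨h, -⟩; exact h
    · rintro rfl
      refine ⟨rfl, ?_, ?_, ?_⟩ <;> simp [Set.Pairwise]
  simp [aux, this]

lemma msupp_card {G : SimpleGraph V} {S : Finset V} {M : Finset (Sym2 V)}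
    (h : IsMatchingIn G S M) : (msupp M).card = 2 * M.card := by
  rw [msupp, Finset.card_biUnion]
  · rw [Finset.sum_congr rfl fun e he => eFin_card (G.not_isDiag_of_mem_edgeSet (h.1 he))]
    simp [mul_comm]
  · intro e he f hf hef
    have := h.2.2 he hf hef
    rw [Function.onFun, Finset.disjoint_left]
    intro a ha haf
    exact this a (mem_eFin.1 ha) (mem_eFin.1 haf)

lemma msupp_subset {G : SimpleGraph V} {S : Finset V} {M : Finset (Sym2 V)}
    (h : IsMatchingIn G S M) : msupp M ⊆ S := by
  intro v hv
  obtain ⟨e, he, hve⟩ := mem_msupp.1 hv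
  exact h.2.1 e he v hve

lemma aux_eq_zero {G : SimpleGraph V} {S : Finset V} {r : ℕ} (h : S.card < 2 * r) :
    aux G S r = 0 := by
  rw [aux, Finset.card_eq_zero]
  rw [Finset.eq_empty_iff_forall_notMem]
  intro M hM
  obtain ⟨hcard, hm⟩ := mem_mFinset.1 hM
  have h1 := msupp_card hm
  have h2 := Finset.card_le_card (msupp_subset hm)
  omega


lemma card_filter_mem_edge (G : SimpleGraph V) {S : Finset V} {u v : V}
    (hu : u ∈ S) (hv : v ∈ S) (huv : G.Adj u v) (r : ℕ) :
    ((mFinset G S (r + 1)).filter (fun M => s(u, v) ∈ M)).card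
      = aux G ((S.erase u).erase v) r := by
  classical
  rw [aux]
  apply Finset.card_bij' (fun M _ => M.erase s(u, v)) (fun N _ => insert s(u, v) N)
  · -- left inverse
    intro M hM
    exact Finset.insert_erase (Finset.mem_filter.1 hM).2
  · -- right inverse
    intro N hN
    apply Finset.erase_insert
    obtain ⟨-, -, hsupp, -⟩ := mem_mFinset.1 hN
    intro h
    have := hsupp _ h u (Sym2.mem_mk_left u v)
    simp at this


  · -- forward maps into target
    intro M hM
    obtain ⟨hM, heM⟩ := Finset.mem_filter.1 hM
    obtain ⟨hcard, hsub, hsupp, hpair⟩ := mem_mFinset.1 hM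
    refine mem_mFinset.2 ⟨by simp [Finset.card_erase_of_mem heM, hcard], ?_, ?_, ?_⟩
    · exact fun e he => hsub (Finset.mem_of_mem_erase (by exact_mod_cast he))
    · intro e he w hw
      have heM' : e ∈ M := Finset.mem_of_mem_erase he
      have hne : e ≠ s(u, v) := Finset.ne_of_mem_erase he
      have hdisj := hpair (by exact_mod_cast heM) (by exact_mod_cast heM') (Ne.symm hne)
      have hwu : w ≠ u := by
        rintro rfl; exact hdisj _ (Sym2.mem_mk_left _ _) hw
      have hwv : w ≠ v := by
        rintro rfl; exact hdisj _ (Sym2.mem_mk_right _ _) hw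
      exact Finset.mem_erase.2 ⟨hwv, Finset.mem_erase.2 ⟨hwu, hsupp e heM' w hw⟩⟩
    · exact hpair.mono (by exact_mod_cast Finset.erase_subset _ _)
  · -- backward maps into source
    intro N hN
    obtain ⟨hcard, hsub, hsupp, hpair⟩ := mem_mFinset.1 hN
    have huN : s(u, v) ∉ N := by
      intro h
      have := hsupp _ h u (Sym2.mem_mk_left u v)
      simp at this
    refine Finset.mem_filter.2 ⟨mem_mFinset.2 ⟨?_, ?_, ?_, ?_⟩, Finset.mem_insert_self _ _⟩
    · rw [Finset.card_insert_of_notMem huN, hcard]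
    · intro e he
      rcases Finset.mem_insert.1 (by exact_mod_cast he) with rfl | h
      · exact (SimpleGraph.mem_edgeSet G).mpr huv
      · exact hsub h
    · intro e he w hw
      rcases Finset.mem_insert.1 he with rfl | h
      · rcases Sym2.mem_iff.1 hw with rfl | rfl
        · exact hu
        · exact hv
      · exact Finset.mem_of_mem_erase (Finset.mem_of_mem_erase (hsupp e h w hw))
    · rw [Finset.coe_insert]
      refine Set.pairwise_insert.2 ⟨hpair, ?_⟩
      intro f hf hfne
      have hface : ∀ w, w ∈ f → w ∈ (S.erase u).erase v := fun w hw => hsupp f hf w hw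
      constructor
      · intro w hw hwf
        have := hface w hwf
        rcases Sym2.mem_iff.1 hw with rfl | rfl
        · exact (Finset.mem_erase.1 (Finset.mem_of_mem_erase this)).1 rfl
        · exact (Finset.mem_erase.1 this).1 rfl
      · intro w hwf hw
        have := hface w hwf
        rcases Sym2.mem_iff.1 hw with rfl | rfl
        · exact (Finset.mem_erase.1 (Finset.mem_of_mem_erase this)).1 rfl
        · exact (Finset.mem_erase.1 this).1 rfl

lemma aux_succ_vertex (G : SimpleGraph V) [DecidableRel G.Adj] {S : Finset V} {u : V}
    (hu : u ∈ S) (r : ℕ) :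
    aux G S (r + 1) = aux G (S.erase u) (r + 1)
      + ∑ z ∈ (S.erase u).filter (G.Adj u), aux G ((S.erase u).erase z) r := by
  classical
  have hsplit := Finset.card_filter_add_card_filter_not
    (s := mFinset G S (r + 1)) (p := fun M => ∀ e ∈ M, u ∉ e)
  have h1 : (mFinset G S (r + 1)).filter (fun M => ∀ e ∈ M, u ∉ e)
      = mFinset G (S.erase u) (r + 1) := by
    ext M
    simp only [Finset.mem_filter, mem_mFinset]
    constructor
    · rintro ⟨⟨hcard, hsub, hsupp, hpair⟩, hP⟩
      refine ⟨hcard, hsub, ?_, hpair⟩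
      intro e he w hw
      exact Finset.mem_erase.2 ⟨fun h => hP e he (h ▸ hw), hsupp e he w hw⟩
    · rintro ⟨hcard, hsub, hsupp, hpair⟩
      refine ⟨⟨hcard, hsub, fun e he w hw => Finset.mem_of_mem_erase (hsupp e he w hw), hpair⟩, ?_⟩
      intro e he hue
      exact (Finset.mem_erase.1 (hsupp e he u hue)).1 rfl
  have h2 : (mFinset G S (r + 1)).filter (fun M => ¬ ∀ e ∈ M, u ∉ e)
      = ((S.erase u).filter (G.Adj u)).biUnion
          (fun z => (mFinset G S (r + 1)).filter (fun M => s(u, z) ∈ M)) := by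
    ext M
    simp only [Finset.mem_filter, Finset.mem_biUnion]
    constructor
    · rintro ⟨hM, hP⟩
      push_neg at hP
      obtain ⟨e, he, hue⟩ := hP
      obtain ⟨hcard, hsub, hsupp, hpair⟩ := mem_mFinset.1 hM
      obtain ⟨z, rfl⟩ := Sym2.mem_iff_exists.1 hue
      have hadj : G.Adj u z := (SimpleGraph.mem_edgeSet G).mp (hsub he)
      have hz : z ∈ S.erase u :=
        Finset.mem_erase.2 ⟨fun h => (G.irrefl (h ▸ hadj)), hsupp _ he z (Sym2.mem_mk_right _ _)⟩
      exact ⟨z, ⟨hz, hadj⟩, hM, he⟩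
    · rintro ⟨z, hz, hM, hzM⟩
      refine ⟨hM, ?_⟩
      push_neg
      exact ⟨s(u, z), hzM, Sym2.mem_mk_left _ _⟩
  have h3 : (((S.erase u).filter (G.Adj u)).biUnion
        (fun z => (mFinset G S (r + 1)).filter (fun M => s(u, z) ∈ M))).card
      = ∑ z ∈ (S.erase u).filter (G.Adj u), aux G ((S.erase u).erase z) r := by
    rw [Finset.card_biUnion]
    · refine Finset.sum_congr rfl fun z hz => ?_
      obtain ⟨hz', hadj⟩ := Finset.mem_filter.1 hz
      exact card_filter_mem_edge G hu (Finset.mem_of_mem_erase hz') hadj r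
    · intro z1 h1 z2 h2 hne
      rw [Function.onFun, Finset.disjoint_left]
      intro M hM1 hM2
      obtain ⟨hM, he1⟩ := Finset.mem_filter.1 hM1
      obtain ⟨-, he2⟩ := Finset.mem_filter.1 hM2
      obtain ⟨-, -, -, hpair⟩ := mem_mFinset.1 hM
      have hedne : s(u, z1) ≠ s(u, z2) := by
        intro heq
        have : z1 ∈ s(u, z2) := heq ▸ Sym2.mem_mk_right u z1
        rcases Sym2.mem_iff.1 this with h | h
        · exact (Finset.mem_erase.1 (Finset.mem_filter.1 h1).1).1 h
        · exact hne h
      exact hpair (by exact_mod_cast he1) (by exact_mod_cast he2) hedne u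
        (Sym2.mem_mk_left _ _) (Sym2.mem_mk_left _ _)
  calc aux G S (r + 1) = (mFinset G S (r+1)).card := rfl
    _ = _ := by rw [← hsplit, h1, h2, h3]; rfl

lemma aux_succ_edge (G : SimpleGraph V) {S : Finset V} {u v : V}
    (hu : u ∈ S) (hv : v ∈ S) (huv : G.Adj u v) (r : ℕ) :
    aux G S (r + 1) = aux (G.deleteEdges {s(u, v)}) S (r + 1)
      + aux G ((S.erase u).erase v) r := by
  classical
  have hsplit := Finset.card_filter_add_card_filter_not
    (s := mFinset G S (r + 1)) (p := fun M => s(u, v) ∈ M)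
  have h1 : (mFinset G S (r + 1)).filter (fun M => ¬ s(u, v) ∈ M)
      = mFinset (G.deleteEdges {s(u, v)}) S (r + 1) := by
    ext M
    simp only [Finset.mem_filter, mem_mFinset]
    constructor
    · rintro ⟨⟨hcard, hsub, hsupp, hpair⟩, hP⟩
      refine ⟨hcard, ?_, hsupp, hpair⟩
      intro e he
      rw [SimpleGraph.edgeSet_deleteEdges]
      exact ⟨hsub he, fun h => hP (by simpa using (Set.mem_singleton_iff.1 h ▸ he))⟩
    · rintro ⟨hcard, hsub, hsupp, hpair⟩
      have hsub' : (M : Set (Sym2 V)) ⊆ G.edgeSet ∧ ∀ e ∈ M, e ≠ s(u, v) := by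
        constructor
        · intro e he
          have := hsub he
          rw [SimpleGraph.edgeSet_deleteEdges] at this
          exact this.1
        · intro e he heq
          have := hsub (by exact_mod_cast he)
          rw [SimpleGraph.edgeSet_deleteEdges] at this
          exact this.2 (by simp [heq])
      exact ⟨⟨hcard, hsub'.1, hsupp, hpair⟩, fun h => hsub'.2 _ h rfl⟩
  rw [aux, ← hsplit, h1, card_filter_mem_edge G hu hv huv r]
  ring_nf
  rfl

lemma sum_aux_erase (G : SimpleGraph V) (S : Finset V) (r : ℕ) :
    ∑ v ∈ S, aux G (S.erase v) r = (S.card - 2 * r) * aux G S r := by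
  classical
  have key : ∀ v ∈ S, aux G (S.erase v) r
      = ((mFinset G S r).filter (fun M => v ∉ msupp M)).card := by
    intro v hv
    rw [aux]
    congr 1
    ext M
    simp only [Finset.mem_filter, mem_mFinset]
    constructor
    · rintro ⟨hcard, hsub, hsupp, hpair⟩
      refine ⟨⟨hcard, hsub, fun e he w hw => Finset.mem_of_mem_erase (hsupp e he w hw), hpair⟩, ?_⟩
      intro hvm
      obtain ⟨e, he, hve⟩ := mem_msupp.1 hvm
      exact (Finset.mem_erase.1 (hsupp e he v hve)).1 rfl
    · rintro ⟨⟨hcard, hsub, hsupp, hpair⟩, hP⟩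
      refine ⟨hcard, hsub, ?_, hpair⟩
      intro e he w hw
      refine Finset.mem_erase.2 ⟨?_, hsupp e he w hw⟩
      rintro rfl
      exact hP (mem_msupp.2 ⟨e, he, hw⟩)
  calc ∑ v ∈ S, aux G (S.erase v) r
      = ∑ v ∈ S, ((mFinset G S r).filter (fun M => v ∉ msupp M)).card :=
        Finset.sum_congr rfl key
    _ = ∑ v ∈ S, ∑ M ∈ mFinset G S r, (if v ∉ msupp M then 1 else 0) := by
        refine Finset.sum_congr rfl fun v _ => ?_
        rw [Finset.card_filter]
    _ = ∑ M ∈ mFinset G S r, ∑ v ∈ S, (if v ∉ msupp M then 1 else 0) := Finset.sum_comm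
    _ = ∑ M ∈ mFinset G S r, (S.card - 2 * r) := by
        refine Finset.sum_congr rfl fun M hM => ?_
        obtain ⟨hcard, hm⟩ := mem_mFinset.1 hM
        rw [← Finset.card_filter]
        have : S.filter (fun v => v ∉ msupp M) = S \ msupp M := by
          ext w; simp [Finset.mem_sdiff]
        rw [this, Finset.card_sdiff_of_subset (msupp_subset hm), msupp_card hm, hcard]
    _ = (S.card - 2 * r) * aux G S r := by
        rw [Finset.sum_const, aux, smul_eq_mul, mul_comm]

lemma apoly_eq_sum (G : SimpleGraph V) (S : Finset V) {N : ℕ} (hN : S.card ≤ N) :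
    apoly G S = ∑ r ∈ Finset.range (N + 1),
      Polynomial.C ((-1 : ℝ) ^ r * (aux G S r : ℝ)) * Polynomial.X ^ (S.card - 2 * r) := by
  rw [apoly]
  apply Finset.sum_subset
  · intro r hr
    simp only [Finset.mem_range] at hr ⊢
    omega
  · intro r _ hr
    simp only [Finset.mem_range, not_lt] at hr
    rw [aux_eq_zero (by omega)]
    simp

lemma neg_apoly_as_sum (G : SimpleGraph V) (S' : Finset V) (c : ℕ)
    (h : S'.card = c - 2) (hc : 2 ≤ c) :
    - apoly G S' = ∑ r ∈ Finset.range c,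
      Polynomial.C ((-1 : ℝ) ^ (r + 1) * (aux G S' r : ℝ)) * Polynomial.X ^ (c - 2 * (r + 1)) := by
  rw [apoly_eq_sum G S' (N := c - 1) (by omega)]
  have hrange : c - 1 + 1 = c := by omega
  rw [hrange, ← Finset.sum_neg_distrib]
  refine Finset.sum_congr rfl fun r _ => ?_
  have hexp : S'.card - 2 * r = c - 2 * (r + 1) := by omega
  have hco : ((-1 : ℝ)) ^ (r + 1) * (aux G S' r : ℝ) = -((-1 : ℝ) ^ r * (aux G S' r : ℝ)) := by
    ring
  rw [hexp, hco, map_neg, neg_mul]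

lemma X_mul_apoly (G : SimpleGraph V) (S' : Finset V) (c : ℕ)
    (h : S'.card = c - 1) (hc : 1 ≤ c) :
    Polynomial.X * apoly G S' = ∑ r ∈ Finset.range c,
      Polynomial.C ((-1 : ℝ) ^ r * (aux G S' r : ℝ)) * Polynomial.X ^ (c - 2 * r) := by
  rw [apoly, Finset.mul_sum]
  have hrange : S'.card + 1 = c := by omega
  rw [hrange]
  refine Finset.sum_congr rfl fun r _ => ?_
  by_cases hr : 2 * r ≤ S'.card
  · have hexp : S'.card - 2 * r + 1 = c - 2 * r := by omega
    rw [mul_comm Polynomial.X, mul_assoc, ← pow_succ, hexp]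
  · rw [aux_eq_zero (by omega)]
    simp

lemma apoly_split (G : SimpleGraph V) (S : Finset V) :
    apoly G S = Polynomial.X ^ S.card + ∑ r ∈ Finset.range S.card,
      Polynomial.C ((-1 : ℝ) ^ (r + 1) * (aux G S (r + 1) : ℝ))
        * Polynomial.X ^ (S.card - 2 * (r + 1)) := by
  rw [apoly, Finset.sum_range_succ']
  rw [aux_zero]
  simp [add_comm]

lemma derivative_apoly (G : SimpleGraph V) (S : Finset V) :
    derivative (apoly G S) = ∑ v ∈ S, apoly G (S.erase v) := by
  classical
  rcases Finset.eq_empty_or_nonempty S with rfl | hS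
  · simp [apoly]
  have hc : 1 ≤ S.card := Finset.card_pos.2 hS
  have hcard : ∀ v ∈ S, (S.erase v).card = S.card - 1 :=
    fun v hv => Finset.card_erase_of_mem hv
  have step1 : ∀ v ∈ S, apoly G (S.erase v)
      = ∑ r ∈ Finset.range (S.card + 1),
        Polynomial.C ((-1 : ℝ) ^ r * (aux G (S.erase v) r : ℝ))
          * Polynomial.X ^ (S.card - 1 - 2 * r) := by
    intro v hv
    rw [apoly_eq_sum G _ (N := S.card) (by rw [hcard v hv]; omega)]
    refine Finset.sum_congr rfl fun r _ => ?_
    rw [hcard v hv]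
  have L : derivative (apoly G S) = ∑ r ∈ Finset.range (S.card + 1),
      Polynomial.C ((-1 : ℝ) ^ r * (aux G S r : ℝ) * ((S.card - 2 * r : ℕ) : ℝ))
        * Polynomial.X ^ (S.card - 2 * r - 1) := by
    rw [apoly, Polynomial.derivative_sum]
    refine Finset.sum_congr rfl fun r _ => ?_
    rw [Polynomial.derivative_C_mul_X_pow]
  have R : ∑ v ∈ S, apoly G (S.erase v) = ∑ r ∈ Finset.range (S.card + 1),
      Polynomial.C ((-1 : ℝ) ^ r * (((S.card - 2 * r) * aux G S r : ℕ) : ℝ))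
        * Polynomial.X ^ (S.card - 1 - 2 * r) := by
    rw [Finset.sum_congr rfl step1, Finset.sum_comm]
    refine Finset.sum_congr rfl fun r _ => ?_
    rw [← Finset.sum_mul, ← map_sum, ← sum_aux_erase, ← Finset.mul_sum, Nat.cast_sum]
  rw [L, R]
  refine Finset.sum_congr rfl fun r _ => ?_
  have hexp : S.card - 2 * r - 1 = S.card - 1 - 2 * r := by omega
  rw [hexp]
  congr 1
  by_cases hr : 2 * r ≤ S.card
  · push_cast [Nat.cast_sub hr]
    ring
  · rw [aux_eq_zero (show S.card < 2 * r by omega)]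
    have : S.card - 2 * r = 0 := by omega
    rw [this]
    push_cast
    ring

lemma apoly_vertex (G : SimpleGraph V) [DecidableRel G.Adj] {S : Finset V} {u : V}
    (hu : u ∈ S) :
    apoly G S = Polynomial.X * apoly G (S.erase u)
      - ∑ z ∈ (S.erase u).filter (G.Adj u), apoly G ((S.erase u).erase z) := by
  classical
  have hc : 1 ≤ S.card := Finset.card_pos.2 ⟨u, hu⟩
  have hLHS : apoly G S = Polynomial.X ^ S.card
      + (∑ r ∈ Finset.range S.card,
          Polynomial.C ((-1 : ℝ) ^ (r + 1) * (aux G (S.erase u) (r + 1) : ℝ))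
            * Polynomial.X ^ (S.card - 2 * (r + 1)))
      + ∑ r ∈ Finset.range S.card, ∑ z ∈ (S.erase u).filter (G.Adj u),
          Polynomial.C ((-1 : ℝ) ^ (r + 1) * (aux G ((S.erase u).erase z) r : ℝ))
            * Polynomial.X ^ (S.card - 2 * (r + 1)) := by
    rw [apoly_split, add_assoc]
    congr 1
    rw [← Finset.sum_add_distrib]
    refine Finset.sum_congr rfl fun r _ => ?_
    rw [aux_succ_vertex G hu r]
    push_cast
    rw [mul_add, map_add, add_mul]
    congr 1
    rw [Finset.mul_sum, map_sum, Finset.sum_mul]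
  have hRHS1 : Polynomial.X * apoly G (S.erase u) = Polynomial.X ^ S.card
      + ∑ r ∈ Finset.range S.card,
          Polynomial.C ((-1 : ℝ) ^ (r + 1) * (aux G (S.erase u) (r + 1) : ℝ))
            * Polynomial.X ^ (S.card - 2 * (r + 1)) := by
    obtain ⟨c, hc'⟩ : ∃ c, S.card = c + 1 := ⟨S.card - 1, by omega⟩
    rw [X_mul_apoly G (S.erase u) S.card (Finset.card_erase_of_mem hu) hc]
    rw [hc', Finset.sum_range_succ', Finset.sum_range_succ]
    rw [aux_zero, aux_eq_zero (show (S.erase u).card < 2 * (c + 1) by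
      rw [Finset.card_erase_of_mem hu]; omega)]
    simp [add_comm]
  have hRHS2 : - ∑ z ∈ (S.erase u).filter (G.Adj u), apoly G ((S.erase u).erase z)
      = ∑ r ∈ Finset.range S.card, ∑ z ∈ (S.erase u).filter (G.Adj u),
          Polynomial.C ((-1 : ℝ) ^ (r + 1) * (aux G ((S.erase u).erase z) r : ℝ))
            * Polynomial.X ^ (S.card - 2 * (r + 1)) := by
    rw [← Finset.sum_neg_distrib, Finset.sum_comm]
    refine Finset.sum_congr rfl fun z hz => ?_
    obtain ⟨hz', hadj⟩ := Finset.mem_filter.1 hz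
    have hzcard : ((S.erase u).erase z).card = S.card - 2 := by
      rw [Finset.card_erase_of_mem hz', Finset.card_erase_of_mem hu]
      omega
    by_cases h2 : 2 ≤ S.card
    · exact neg_apoly_as_sum G _ S.card hzcard h2
    · exfalso
      have : u ∈ S ∧ z ∈ S.erase u := ⟨hu, hz'⟩
      have h1 : 1 ≤ (S.erase u).card := Finset.card_pos.2 ⟨z, hz'⟩
      have := Finset.card_erase_of_mem hu
      omega
  rw [hLHS, sub_eq_add_neg, hRHS1, hRHS2]

lemma apoly_edge (G : SimpleGraph V) {S : Finset V} {u v : V}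
    (hu : u ∈ S) (hv : v ∈ S) (huv : G.Adj u v) :
    apoly G S = apoly (G.deleteEdges {s(u, v)}) S - apoly G ((S.erase u).erase v) := by
  classical
  have hvu : v ∈ S.erase u := Finset.mem_erase.2 ⟨fun h => G.irrefl (h ▸ huv), hv⟩
  have h2 : 2 ≤ S.card := by
    have h1 : 1 ≤ (S.erase u).card := Finset.card_pos.2 ⟨v, hvu⟩
    have := Finset.card_erase_of_mem hu
    omega
  have hLHS : apoly G S = Polynomial.X ^ S.card
      + ((∑ r ∈ Finset.range S.card,
          Polynomial.C ((-1 : ℝ) ^ (r + 1) * (aux (G.deleteEdges {s(u, v)}) S (r + 1) : ℝ))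
            * Polynomial.X ^ (S.card - 2 * (r + 1)))
      + ∑ r ∈ Finset.range S.card,
          Polynomial.C ((-1 : ℝ) ^ (r + 1) * (aux G ((S.erase u).erase v) r : ℝ))
            * Polynomial.X ^ (S.card - 2 * (r + 1))) := by
    rw [apoly_split]
    congr 1
    rw [← Finset.sum_add_distrib]
    refine Finset.sum_congr rfl fun r _ => ?_
    rw [aux_succ_edge G hu hv huv r]
    push_cast
    rw [mul_add, map_add, add_mul]
  have hRHS1 : apoly (G.deleteEdges {s(u, v)}) S = Polynomial.X ^ S.card
      + ∑ r ∈ Finset.range S.card,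
          Polynomial.C ((-1 : ℝ) ^ (r + 1) * (aux (G.deleteEdges {s(u, v)}) S (r + 1) : ℝ))
            * Polynomial.X ^ (S.card - 2 * (r + 1)) := apoly_split _ _
  have hRHS2 : - apoly G ((S.erase u).erase v)
      = ∑ r ∈ Finset.range S.card,
          Polynomial.C ((-1 : ℝ) ^ (r + 1) * (aux G ((S.erase u).erase v) r : ℝ))
            * Polynomial.X ^ (S.card - 2 * (r + 1)) := by
    refine neg_apoly_as_sum G _ S.card ?_ h2
    rw [Finset.card_erase_of_mem hvu, Finset.card_erase_of_mem hu]
    omega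
  rw [hLHS, sub_eq_add_neg, hRHS1, hRHS2]
  ring

lemma aux_deleteEdges_eq (G : SimpleGraph V) {S : Finset V} {u v : V} (hu : u ∉ S ∨ v ∉ S) (r : ℕ) :
    aux (G.deleteEdges {s(u, v)}) S r = aux G S r := by
  rw [aux, aux]
  congr 1
  ext M
  simp only [mem_mFinset]
  constructor
  · rintro ⟨hcard, hsub, hsupp, hpair⟩
    refine ⟨hcard, ?_, hsupp, hpair⟩
    intro e he
    have := hsub he
    rw [SimpleGraph.edgeSet_deleteEdges] at this
    exact this.1
  · rintro ⟨hcard, hsub, hsupp, hpair⟩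
    refine ⟨hcard, ?_, hsupp, hpair⟩
    intro e he
    rw [SimpleGraph.edgeSet_deleteEdges]
    refine ⟨hsub he, ?_⟩
    intro hmem
    rw [Set.mem_singleton_iff] at hmem
    subst hmem
    rcases hu with hu | hv
    · exact hu (hsupp _ (by exact_mod_cast he) u (Sym2.mem_mk_left _ _))
    · exact hv (hsupp _ (by exact_mod_cast he) v (Sym2.mem_mk_right _ _))

lemma apoly_deleteEdges_eq (G : SimpleGraph V) {S : Finset V} {u v : V} (hu : u ∉ S ∨ v ∉ S) :
    apoly (G.deleteEdges {s(u, v)}) S = apoly G S := by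
  rw [apoly, apoly]
  refine Finset.sum_congr rfl fun r _ => ?_
  rw [aux_deleteEdges_eq G hu]

lemma apoly_monic (G : SimpleGraph V) (S : Finset V) : (apoly G S).Monic := by
  rw [apoly_split]
  rcases Nat.eq_zero_or_pos S.card with h0 | hpos
  · rw [h0]
    simp [Finset.range_zero]
  apply Polynomial.monic_X_pow_add
  refine lt_of_le_of_lt (Polynomial.degree_sum_le _ _) ?_
  rw [Finset.sup_lt_iff (by exact_mod_cast WithBot.bot_lt_coe S.card)]
  intro r _
  refine lt_of_le_of_lt (Polynomial.degree_C_mul_X_pow_le _ _) ?_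
  exact_mod_cast (show S.card - 2 * (r + 1) < S.card by omega)

lemma apoly_ne_zero (G : SimpleGraph V) (S : Finset V) : apoly G S ≠ 0 :=
  (apoly_monic G S).ne_zero

theorem HL (G : SimpleGraph V) [DecidableRel G.Adj] :
    ∀ (n : ℕ) (S : Finset V), S.card = n → ∀ {u v : V}, u ∈ S → v ∈ S → u ≠ v → ∀ x : ℝ,
      Polynomial.eval x (apoly G S) * Polynomial.eval x (apoly G ((S.erase u).erase v))
        ≤ Polynomial.eval x (apoly G (S.erase u)) * Polynomial.eval x (apoly G (S.erase v)) := by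
  intro n
  induction n with
  | zero =>
    intro S hS u v hu _ _ _
    exact absurd (Finset.card_pos.2 ⟨u, hu⟩) (by omega)
  | succ n ih =>
    intro S hS u v hu hv huv x
    have hvS1 : v ∈ S.erase u := Finset.mem_erase.2 ⟨Ne.symm huv, hv⟩
    have huS2 : u ∈ S.erase v := Finset.mem_erase.2 ⟨huv, hu⟩
    set S1 := S.erase u with hS1
    set Z := S1.filter (G.Adj u) with hZ
    set a := Polynomial.eval x (apoly G S1) with ha
    set b := Polynomial.eval x (apoly G (S1.erase v)) with hb
    have hEA : Polynomial.eval x (apoly G S)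
        = x * a - ∑ z ∈ Z, Polynomial.eval x (apoly G (S1.erase z)) := by
      rw [apoly_vertex G hu]
      simp [Polynomial.eval_finset_sum]
      rfl
    have hES2 : (S.erase v).erase u = S1.erase v := Finset.erase_right_comm
    have hfilter : (S1.erase v).filter (G.Adj u) = Z.erase v := by
      rw [hZ, Finset.filter_erase]
    have hEB : Polynomial.eval x (apoly G (S.erase v))
        = x * b - ∑ z ∈ Z.erase v, Polynomial.eval x (apoly G ((S1.erase v).erase z)) := by
      rw [apoly_vertex G huS2, hES2, hfilter]
      simp [Polynomial.eval_finset_sum]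
      exact Or.inl rfl
    have hcard1 : S1.card = n := by
      rw [hS1, Finset.card_erase_of_mem hu, hS]
      omega
    have hIH : ∀ z ∈ Z.erase v,
        a * Polynomial.eval x (apoly G ((S1.erase v).erase z))
          ≤ Polynomial.eval x (apoly G (S1.erase z)) * b := by
      intro z hzv
      have hz : z ∈ Z := Finset.mem_of_mem_erase hzv
      have hzS1 : z ∈ S1 := (Finset.mem_filter.1 hz).1
      have hzvne : z ≠ v := (Finset.mem_erase.1 hzv).1
      have := ih S1 hcard1 hzS1 hvS1 hzvne x
      rwa [Finset.erase_right_comm] at this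
    have hsplit : ∑ z ∈ Z, Polynomial.eval x (apoly G (S1.erase z)) * b
        = (∑ z ∈ Z.erase v, Polynomial.eval x (apoly G (S1.erase z)) * b)
          + (if v ∈ Z then b * b else 0) := by
      by_cases hvZ : v ∈ Z
      · rw [if_pos hvZ, ← Finset.sum_erase_add Z _ hvZ, ← hb]
      · rw [if_neg hvZ, Finset.erase_eq_of_notMem hvZ, add_zero]
    have hchain : a * ∑ z ∈ Z.erase v, Polynomial.eval x (apoly G ((S1.erase v).erase z))
        ≤ ∑ z ∈ Z, Polynomial.eval x (apoly G (S1.erase z)) * b := by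
      rw [Finset.mul_sum, hsplit]
      have h1 : ∑ z ∈ Z.erase v, a * Polynomial.eval x (apoly G ((S1.erase v).erase z))
          ≤ ∑ z ∈ Z.erase v, Polynomial.eval x (apoly G (S1.erase z)) * b :=
        Finset.sum_le_sum hIH
      have h2 : (0 : ℝ) ≤ (if v ∈ Z then b * b else 0) := by
        split
        · exact mul_self_nonneg b
        · exact le_rfl
      linarith
    rw [hEA, hEB]
    have hsm : (∑ z ∈ Z, Polynomial.eval x (apoly G (S1.erase z))) * b
        = ∑ z ∈ Z, Polynomial.eval x (apoly G (S1.erase z)) * b := Finset.sum_mul _ _ _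
    nlinarith [hchain, hsm]

lemma rm_eq_zero_iff {p : Polynomial ℝ} (hp : p ≠ 0) {θ : ℝ} :
    p.rootMultiplicity θ = 0 ↔ Polynomial.eval θ p ≠ 0 := by
  rw [Polynomial.rootMultiplicity_eq_zero_iff]
  constructor
  · intro h he
    exact hp (h he)
  · intro h hroot
    exact absurd hroot h

lemma two_le_rm_iff {p : Polynomial ℝ} (hp : p ≠ 0) {θ : ℝ} :
    2 ≤ p.rootMultiplicity θ ↔
      Polynomial.eval θ p = 0 ∧ Polynomial.eval θ (derivative p) = 0 := by
  constructor
  · intro h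
    have hd : (Polynomial.X - Polynomial.C θ) ^ 2 ∣ p :=
      dvd_trans (pow_dvd_pow _ h) (Polynomial.pow_rootMultiplicity_dvd p θ)
    obtain ⟨g, rfl⟩ := hd
    constructor
    · simp
    · simp [Polynomial.derivative_mul, Polynomial.derivative_pow]
  · rintro ⟨h0, h1⟩
    have hm1 : 1 ≤ p.rootMultiplicity θ := (Polynomial.rootMultiplicity_pos hp).2 h0
    rcases Nat.lt_or_ge (p.rootMultiplicity θ) 2 with h | h
    · exfalso
      have hmeq : p.rootMultiplicity θ = 1 := by omega
      have hq := Polynomial.eval_divByMonic_pow_rootMultiplicity_ne_zero θ hp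
      have heq := Polynomial.pow_mul_divByMonic_rootMultiplicity_eq p θ
      rw [hmeq, pow_one] at heq hq
      rw [← heq] at h1
      rw [Polynomial.derivative_mul] at h1
      simp at h1
      exact hq h1
    · exact h

lemma rm_eq_one {p : Polynomial ℝ} (hp : p ≠ 0) {θ : ℝ}
    (h0 : Polynomial.eval θ p = 0) (h1 : Polynomial.eval θ (derivative p) ≠ 0) :
    p.rootMultiplicity θ = 1 := by
  have hm1 : 1 ≤ p.rootMultiplicity θ := (Polynomial.rootMultiplicity_pos hp).2 h0
  have : ¬ 2 ≤ p.rootMultiplicity θ := by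
    intro h
    exact h1 ((two_le_rm_iff hp).1 h).2
  omega

lemma eval_erase_eq_zero (G : SimpleGraph V) (S : Finset V) (θ : ℝ)
    (h0 : Polynomial.eval θ (apoly G S) = 0)
    (h1 : Polynomial.eval θ (derivative (apoly G S)) = 0) :
    ∀ v ∈ S, Polynomial.eval θ (apoly G (S.erase v)) = 0 := by
  classical
  set f : V → ℝ := fun v => Polynomial.eval θ (apoly G (S.erase v)) with hf
  have hsum : ∑ v ∈ S, f v = 0 := by
    rw [← h1, derivative_apoly, Polynomial.eval_finset_sum]
  have hprod : ∀ u ∈ S, ∀ v ∈ S, u ≠ v → 0 ≤ f u * f v := by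
    intro u hu v hv hne
    have := HL G S.card S rfl hu hv hne θ
    rw [h0, zero_mul] at this
    exact this
  intro w hw
  by_contra hfw
  rcases lt_or_gt_of_ne hfw with hneg | hpos
  · have hnonpos : ∀ v ∈ S.erase w, f v ≤ 0 := by
      intro v hv
      by_contra hv'
      push_neg at hv'
      have := hprod v (Finset.mem_of_mem_erase hv) w hw (Finset.mem_erase.1 hv).1
      nlinarith
    have : ∑ v ∈ S.erase w, f v + f w = ∑ v ∈ S, f v := Finset.sum_erase_add S f hw
    have hsn : ∑ v ∈ S.erase w, f v ≤ 0 := Finset.sum_nonpos hnonpos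
    rw [hsum] at this
    linarith
  · have hnonneg : ∀ v ∈ S.erase w, 0 ≤ f v := by
      intro v hv
      by_contra hv'
      push_neg at hv'
      have := hprod v (Finset.mem_of_mem_erase hv) w hw (Finset.mem_erase.1 hv).1
      nlinarith
    have : ∑ v ∈ S.erase w, f v + f w = ∑ v ∈ S, f v := Finset.sum_erase_add S f hw
    have hsn : 0 ≤ ∑ v ∈ S.erase w, f v := Finset.sum_nonneg hnonneg
    rw [hsum] at this
    linarith

lemma sym2_map_mem_edgeSet (G : SimpleGraph V) {W : Set V} (e : Sym2 ↥W) :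
    e.map (Subtype.val) ∈ G.edgeSet ↔ e ∈ (G.induce W).edgeSet := by
  induction e with
  | _ a b => simp [SimpleGraph.mem_edgeSet]

lemma numMatchings_induce_eq_aux (G : SimpleGraph V) (W : Set V) [Fintype ↥W] (r : ℕ) :
    (Nat.card {M : Finset (Sym2 ↥W) // M.card = r ∧
        (M : Set (Sym2 ↥W)) ⊆ (G.induce W).edgeSet ∧
        (M : Set (Sym2 ↥W)).Pairwise fun e f => ∀ v : ↥W, v ∈ e → v ∉ f})
      = aux G W.toFinset r := by
  classical
  have hrhs : aux G W.toFinset r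
      = Nat.card {M : Finset (Sym2 V) // M.card = r ∧ IsMatchingIn G W.toFinset M} := by
    rw [aux, ← Nat.card_eq_finsetCard]
    exact Nat.card_congr (Equiv.subtypeEquivRight fun M => mem_mFinset)
  rw [hrhs]
  apply Nat.card_congr
  have hinj : Function.Injective (Sym2.map (Subtype.val : ↥W → V)) :=
    Sym2.map.injective Subtype.val_injective
  have hmemmap : ∀ (e : Sym2 ↥W) (v : V), v ∈ e.map Subtype.val ↔ ∃ w : ↥W, w ∈ e ∧ ↑w = v := by
    intro e v
    exact Sym2.mem_map
  refine Equiv.ofBijective (fun M => ⟨(M : Finset (Sym2 ↥W)).image (Sym2.map Subtype.val), ?_, ?_, ?_, ?_⟩) ⟨?_, ?_⟩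
  -- card
  · rw [Finset.card_image_of_injective _ hinj]
    exact M.2.1
  -- edges
  · intro e he
    rw [Finset.coe_image] at he
    obtain ⟨e', he', rfl⟩ := he
    exact (sym2_map_mem_edgeSet G e').2 (M.2.2.1 he')
  -- support
  · intro e he v hv
    obtain ⟨e', he', rfl⟩ := Finset.mem_image.1 he
    obtain ⟨w, _, rfl⟩ := (hmemmap e' v).1 hv
    rw [Set.mem_toFinset]
    exact w.2
  -- pairwise
  · rw [Finset.coe_image]
    rintro e1 he1 e2 he2 hne v hv1 hv2
    obtain ⟨e1', he1', rfl⟩ := he1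
    obtain ⟨e2', he2', rfl⟩ := he2
    have hne' : e1' ≠ e2' := fun h => hne (by rw [h])
    obtain ⟨w1, hw1, rfl⟩ := (hmemmap e1' v).1 hv1
    obtain ⟨w2, hw2, hw⟩ := (hmemmap e2' _).1 hv2
    have : w2 = w1 := Subtype.val_injective hw
    subst this
    exact M.2.2.2 he1' he2' hne' w2 hw1 hw2
  -- injective
  · intro M1 M2 h
    apply Subtype.ext
    have := congrArg Subtype.val h
    simp only at this
    exact Finset.image_injective hinj this
  -- surjective
  · rintro ⟨N, hcard, hsub, hsupp, hpair⟩
    have hex : ∀ e ∈ N, ∃ e' : Sym2 ↥W, e'.map Subtype.val = e := by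
      intro e he
      induction e with
      | _ a b =>
        have ha : a ∈ W := by
          have := hsupp _ he a (Sym2.mem_mk_left _ _)
          rwa [Set.mem_toFinset] at this
        have hb : b ∈ W := by
          have := hsupp _ he b (Sym2.mem_mk_right _ _)
          rwa [Set.mem_toFinset] at this
        exact ⟨s(⟨a, ha⟩, ⟨b, hb⟩), rfl⟩
    set g : {e // e ∈ N} → Sym2 ↥W := fun x => Classical.choose (hex x.1 x.2) with hg
    have hgspec : ∀ x : {e // e ∈ N}, (g x).map Subtype.val = x.1 :=
      fun x => Classical.choose_spec (hex x.1 x.2)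
    refine ⟨⟨N.attach.image g, ?_, ?_, ?_⟩, ?_⟩
    · -- card
      have himg : (N.attach.image g).image (Sym2.map Subtype.val) = N := by
        rw [Finset.image_image]
        have : (Sym2.map Subtype.val) ∘ g = fun x : {e // e ∈ N} => x.1 := by
          funext x
          exact hgspec x
        rw [this]
        exact Finset.attach_image_val
      calc (N.attach.image g).card
          = ((N.attach.image g).image (Sym2.map Subtype.val)).card :=
            (Finset.card_image_of_injective _ hinj).symm
        _ = N.card := by rw [himg]
        _ = r := hcard
    · -- edges
      intro e' he'
      obtain ⟨x, -, rfl⟩ := Finset.mem_image.1 (by exact_mod_cast he')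
      rw [← sym2_map_mem_edgeSet G, hgspec x]
      exact hsub (by exact_mod_cast x.2)
    · -- pairwise
      rintro e1 he1 e2 he2 hne v hv1 hv2
      obtain ⟨x1, -, rfl⟩ := Finset.mem_image.1 (by exact_mod_cast he1)
      obtain ⟨x2, -, rfl⟩ := Finset.mem_image.1 (by exact_mod_cast he2)
      have hne2 : x1.1 ≠ x2.1 := by
        intro h
        apply hne
        rw [← hgspec x1, ← hgspec x2] at h
        rw [hinj h]
      have h1 : (↑v : V) ∈ x1.1 := by
        rw [← hgspec x1]
        exact Sym2.mem_map.2 ⟨v, hv1, rfl⟩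
      have h2 : (↑v : V) ∈ x2.1 := by
        rw [← hgspec x2]
        exact Sym2.mem_map.2 ⟨v, hv2, rfl⟩
      exact hpair (by exact_mod_cast x1.2) (by exact_mod_cast x2.2) hne2 ↑v h1 h2
    · -- maps to N
      apply Subtype.ext
      simp only
      rw [Finset.image_image]
      have : (Sym2.map Subtype.val) ∘ g = fun x : {e // e ∈ N} => x.1 := by
        funext x
        exact hgspec x
      rw [this]
      exact Finset.attach_image_val



lemma numMatchings_eq_aux (G : SimpleGraph V) (r : ℕ) :
    numMatchings G r = aux G Finset.univ r := by
  classical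
  rw [numMatchings, aux, ← Nat.card_eq_finsetCard]
  apply Nat.card_congr
  apply Equiv.subtypeEquivRight
  intro M
  rw [mem_mFinset]
  unfold IsMatchingIn
  constructor
  · rintro ⟨h1, h2, h3⟩
    exact ⟨h1, h2, fun e _ v _ => Finset.mem_univ v, h3⟩
  · rintro ⟨h1, h2, _, h3⟩
    exact ⟨h1, h2, h3⟩

lemma matchingPoly_eq_apoly_univ (G : SimpleGraph V) :
    matchingPoly G = apoly G Finset.univ := by
  rw [matchingPoly, apoly]
  have hc : Nat.card V = (Finset.univ : Finset V).card := by
    rw [Nat.card_eq_fintype_card, Finset.card_univ]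
  rw [hc]
  refine Finset.sum_congr rfl fun r _ => ?_
  rw [numMatchings_eq_aux]

lemma mult_induce (G : SimpleGraph V) (W : Set V) [Fintype ↥W] (θ : ℝ) :
    mult θ (G.induce W) = (apoly G W.toFinset).rootMultiplicity θ := by
  rw [mult]
  congr 1
  rw [matchingPoly, apoly]
  have hc : Nat.card ↥W = W.toFinset.card := by
    rw [Nat.card_eq_fintype_card, Set.toFinset_card]
  have hnm : ∀ r : ℕ, numMatchings (G.induce W) r = aux G W.toFinset r :=
    fun r => numMatchings_induce_eq_aux G W r
  rw [hc]
  refine Finset.sum_congr rfl fun r _ => ?_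
  rw [hnm r]

lemma mult_eq_rm (G : SimpleGraph V) (θ : ℝ) :
    mult θ G = (apoly G Finset.univ).rootMultiplicity θ := by
  rw [mult, matchingPoly_eq_apoly_univ]

end Dev

/-- Deleting a θ-extreme edge from a θ-super positive graph keeps it θ-super positive. -/
theorem stmt_15 {V : Type*} [Fintype V] (θ : ℝ) (G : SimpleGraph V)
    (h : IsSuperPositive θ G) (u v : V) (huv : G.Adj u v)
    (hext : IsExtreme θ G {u, v}) :
    IsSuperPositive θ (G.deleteEdges {s(u, v)}) := by
  classical
  obtain ⟨hG0, hG1⟩ := h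
  have hne : u ≠ v := huv.ne
  have hW1 : ∀ w : V, (({w}ᶜ : Set V)).toFinset = Finset.univ.erase w := by
    intro w
    ext x
    simp [Set.mem_toFinset]
  have hW2 : ((({u, v} : Set V))ᶜ).toFinset = (Finset.univ.erase u).erase v := by
    ext x
    simp only [Set.mem_toFinset, Set.mem_compl_iff, Set.mem_insert_iff, Set.mem_singleton_iff,
      Finset.mem_erase, Finset.mem_univ, and_true]
    tauto
  have bdel : ∀ (H : SimpleGraph V) (w : V),
      mult θ (deleteVert H w) = (apoly H (Finset.univ.erase w)).rootMultiplicity θ := by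
    intro H w
    have h1 := mult_induce H ({w}ᶜ : Set V) θ
    rw [hW1 w] at h1
    exact h1
  have hpair2 : ({u, v} : Set V).ncard = 2 := Set.ncard_pair hne
  have hext' : mult θ (deleteSet G {u, v}) = mult θ G + ({u, v} : Set V).ncard := hext
  have hext2 : (apoly G ((Finset.univ.erase u).erase v)).rootMultiplicity θ = 2 := by
    have h1 := mult_induce G (({u, v} : Set V))ᶜ θ
    rw [hW2] at h1
    have h2 : mult θ (deleteSet G {u, v})
        = (apoly G ((Finset.univ.erase u).erase v)).rootMultiplicity θ := h1
    rw [← h2, hext', hG0, hpair2]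
  obtain ⟨F2a, F2b⟩ := (two_le_rm_iff
    (apoly_ne_zero G ((Finset.univ.erase u).erase v))).1 (by rw [hext2])
  have F3 := eval_erase_eq_zero G ((Finset.univ.erase u).erase v) θ F2a F2b
  have hG0' : (apoly G Finset.univ).rootMultiplicity θ = 0 := by
    rw [← mult_eq_rm]
    exact hG0
  have F0 : Polynomial.eval θ (apoly G Finset.univ) ≠ 0 :=
    (rm_eq_zero_iff (apoly_ne_zero G Finset.univ)).1 hG0'
  have F1 : ∀ w : V, (apoly G (Finset.univ.erase w)).rootMultiplicity θ = 1 := by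
    intro w
    rw [← bdel G w]
    exact hG1 w
  have F1a : ∀ w : V, Polynomial.eval θ (apoly G (Finset.univ.erase w)) = 0 := by
    intro w
    refine (Polynomial.rootMultiplicity_pos (apoly_ne_zero G (Finset.univ.erase w))).1 ?_
    rw [F1 w]
    omega
  have hEdge : ∀ (S : Finset V), u ∈ S → v ∈ S →
      apoly (G.deleteEdges {s(u, v)}) S = apoly G S + apoly G ((S.erase u).erase v) := by
    intro S hu hv
    have h := apoly_edge G hu hv huv
    linear_combination -h
  have hGeT := hEdge Finset.univ (Finset.mem_univ u) (Finset.mem_univ v)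
  have hTuveval : Polynomial.eval θ (apoly G ((Finset.univ.erase u).erase v)) = 0 := by
    refine (Polynomial.rootMultiplicity_pos (apoly_ne_zero _ _)).1 ?_
    rw [hext2]
    omega
  have G1eval : Polynomial.eval θ (apoly (G.deleteEdges {s(u, v)}) Finset.univ) ≠ 0 := by
    rw [hGeT, Polynomial.eval_add, hTuveval, add_zero]
    exact F0
  have Goal1 : mult θ (G.deleteEdges {s(u, v)}) = 0 := by
    rw [mult_eq_rm]
    exact (rm_eq_zero_iff (apoly_ne_zero _ _)).2 G1eval
  refine ⟨Goal1, ?_⟩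
  intro w
  rw [bdel (G.deleteEdges {s(u, v)}) w]
  by_cases hwu : w = u
  · subst hwu
    rw [apoly_deleteEdges_eq G (Or.inl (Finset.notMem_erase w Finset.univ))]
    exact F1 w
  by_cases hwv : w = v
  · subst hwv
    rw [apoly_deleteEdges_eq G (Or.inr (Finset.notMem_erase w Finset.univ))]
    exact F1 w
  have huw : u ∈ Finset.univ.erase w := Finset.mem_erase.2 ⟨fun h => hwu h.symm, Finset.mem_univ u⟩
  have hvw : v ∈ Finset.univ.erase w := Finset.mem_erase.2 ⟨fun h => hwv h.symm, Finset.mem_univ v⟩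
  have hkey := hEdge (Finset.univ.erase w) huw hvw
  have hcomm : ((Finset.univ.erase w).erase u).erase v
      = ((Finset.univ.erase u).erase v).erase w := by
    have h1 : (Finset.univ.erase w).erase u = ((Finset.univ : Finset V).erase u).erase w :=
      Finset.erase_right_comm
    rw [h1, Finset.erase_right_comm]
  have hwTuv : w ∈ (Finset.univ.erase u).erase v :=
    Finset.mem_erase.2 ⟨hwv, Finset.mem_erase.2 ⟨hwu, Finset.mem_univ w⟩⟩
  have e0 : Polynomial.eval θ (apoly (G.deleteEdges {s(u, v)}) (Finset.univ.erase w)) = 0 := by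
    rw [hkey, Polynomial.eval_add, F1a w, hcomm, F3 w hwTuv, add_zero]
  have hm1 : 1 ≤ (apoly (G.deleteEdges {s(u, v)}) (Finset.univ.erase w)).rootMultiplicity θ :=
    (Polynomial.rootMultiplicity_pos (apoly_ne_zero _ _)).2 e0
  have hm2 : ¬ 2 ≤ (apoly (G.deleteEdges {s(u, v)}) (Finset.univ.erase w)).rootMultiplicity θ := by
    intro h2
    obtain ⟨hh0, hh1⟩ := (two_le_rm_iff (apoly_ne_zero _ _)).1 h2
    have hz := eval_erase_eq_zero (G.deleteEdges {s(u, v)}) (Finset.univ.erase w) θ hh0 hh1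
    have hWid := apoly_vertex (G.deleteEdges {s(u, v)}) (S := Finset.univ) (u := w)
      (Finset.mem_univ w)
    have hzero : Polynomial.eval θ (apoly (G.deleteEdges {s(u, v)}) Finset.univ) = 0 := by
      rw [hWid, Polynomial.eval_sub, Polynomial.eval_mul, Polynomial.eval_X, e0, mul_zero,
        Polynomial.eval_finset_sum]
      rw [Finset.sum_eq_zero fun z hzm => hz z (Finset.mem_filter.1 hzm).1]
      norm_num
    exact G1eval hzero
  omega

end MatchPoly
end
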